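/- arXiv:math/0408054 — 4 statements merged into one kernel-verified Lean document; each statement's English description precedes it below -/
import Mathlib

section
/- Let (H_n(x))_{n≥0} be a sequence of rational functions in ℂ(x) such that f(x,y) = Σ_{n≥0} H_n(x) yⁿ, regarded as a formal power series in y with coefficients in ℂ(x), is D-finite in y. For each n let S_n ⊆ ℂ be the set of poles of H_n, and let S = ∪_{n≥0} S_n. Then S has only finitely many accumulation points in ℂ. -/
open scoped Classical

/-- Interpret a polynomial `P(x,y) ∈ ℂ[x][y]` as a power series in `y`
with coefficients in `ℂ(x)`. -/
noncomputable def toSeries (P : Polynomial (Polynomial ℂ)) : PowerSeries (RatFunc ℂ) :=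
  ((P.map (algebraMap (Polynomial ℂ) (RatFunc ℂ)) : Polynomial (RatFunc ℂ)) :
    PowerSeries (RatFunc ℂ))

/-- A power series in `y` with coefficients in `ℂ(x)` is D-finite (in `y`) if it satisfies a
nontrivial linear differential equation `Σ_{i=0}^k P_i(x,y) ∂^i f/∂y^i = 0` whose
coefficients are polynomials in `x` and `y`. -/
def IsDFiniteY (f : PowerSeries (RatFunc ℂ)) : Prop :=
  ∃ (k : ℕ) (P : ℕ → Polynomial (Polynomial ℂ)),
    (∃ i, i ≤ k ∧ P i ≠ 0) ∧
    ∑ i ∈ Finset.range (k + 1),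
      toSeries (P i) * ((fun g => PowerSeries.derivative (RatFunc ℂ) g)^[i] f) = 0

namespace DFAux

open Polynomial Filter Metric
open scoped Topology

lemma coeff_iterate_deriv (i : ℕ) (f : PowerSeries (RatFunc ℂ)) (n : ℕ) :
    (PowerSeries.coeff (R := RatFunc ℂ) n) ((fun g => PowerSeries.derivative (RatFunc ℂ) g)^[i] f)
      = (∏ t ∈ Finset.range i, ((n : RatFunc ℂ) + t + 1)) *
        (PowerSeries.coeff (R := RatFunc ℂ) (n + i)) f := by
  induction i generalizing n with
  | zero => simp
  | succ i IH =>
      rw [Function.iterate_succ_apply', PowerSeries.coeff_derivative, IH (n + 1),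
        Finset.prod_range_succ', show n + 1 + i = n + (i + 1) from by omega,
        Finset.prod_congr rfl (fun t _ => show (((n+1 : ℕ) : RatFunc ℂ)) + t + 1
          = (n : RatFunc ℂ) + ((t + 1 : ℕ) : RatFunc ℂ) + 1 from by push_cast; ring)]
      push_cast
      ring

lemma not_accPt_of_finite {F : Set ℂ} (hF : F.Finite) (z : ℂ) : ¬ AccPt z (𝓟 F) := by
  rw [accPt_principal_iff_clusterPt]
  intro h
  have hcl : z ∈ closure (F \ {z}) := mem_closure_iff_clusterPt.mpr h
  rw [((hF.subset Set.diff_subset).isClosed).closure_eq] at hcl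
  simp at hcl

lemma denom_dvd_of_mul_eq {r : RatFunc ℂ} {q p : Polynomial ℂ} (hq : q ≠ 0)
    (h : algebraMap (Polynomial ℂ) (RatFunc ℂ) q * r = algebraMap _ _ p) : r.denom ∣ q := by
  refine (RatFunc.denom_dvd hq).mpr ⟨p, ?_⟩
  rw [eq_div_iff (RatFunc.algebraMap_ne_zero hq), mul_comm]
  exact h

lemma mul_denom_eq_num (x : RatFunc ℂ) :
    x * algebraMap (Polynomial ℂ) (RatFunc ℂ) x.denom = algebraMap _ _ x.num := by
  exact (eq_div_iff (RatFunc.algebraMap_ne_zero x.denom_ne_zero)).mp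
    (RatFunc.num_div_denom x).symm

noncomputable def ffp (j i : ℕ) : Polynomial (Polynomial ℂ) :=
  ∏ t ∈ Finset.range i, (X + C (C ((t : ℂ) + 1 - (j : ℂ))))

lemma ffp_monic (j i : ℕ) : (ffp j i).Monic :=
  monic_prod_of_monic _ _ fun t _ => monic_X_add_C _

lemma ffp_natDegree (j i : ℕ) : (ffp j i).natDegree = i := by
  have h1 : ∀ t ∈ Finset.range i, (X + C (C ((t : ℂ) + 1 - (j : ℂ)))).natDegree = 1 :=
    fun t _ => natDegree_X_add_C _
  rw [ffp, natDegree_prod_of_monic _ _ fun t _ => monic_X_add_C _, Finset.sum_congr rfl h1]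
  simp

lemma ffp_coeff_self (j i : ℕ) : (ffp j i).coeff i = 1 := by
  have := (ffp_monic j i).coeff_natDegree
  rwa [ffp_natDegree] at this

lemma ffp_coeff_zero (j i d : ℕ) (h : i < d) : (ffp j i).coeff d = 0 :=
  coeff_eq_zero_of_natDegree_lt (by rw [ffp_natDegree]; exact h)

noncomputable def Apoly (P : ℕ → Polynomial (Polynomial ℂ)) (k D s : ℕ) :
    Polynomial (Polynomial ℂ) :=
  ∑ i ∈ Finset.range (k+1), ∑ j ∈ Finset.range (D+1),
    if i + D = s + j then C ((P i).coeff j) * ffp j i else 0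

lemma exists_top (k D : ℕ) (P : ℕ → Polynomial (Polynomial ℂ))
    (i₀ : ℕ) (hi₀k : i₀ ≤ k) (hi₀ : P i₀ ≠ 0) (hDb : (P i₀).natDegree ≤ D) :
    ∃ s₁ ≤ D + k, Apoly P k D s₁ ≠ 0 ∧ ∀ s, s₁ < s → Apoly P k D s = 0 := by
  set E : Finset (ℕ × ℕ) :=
    (Finset.range (k+1) ×ˢ Finset.range (D+1)).filter
      (fun ij => (P ij.1).coeff ij.2 ≠ 0) with hE
  have hEmem : ∀ ij : ℕ × ℕ, ij ∈ E ↔ ij.1 ≤ k ∧ ij.2 ≤ D ∧ (P ij.1).coeff ij.2 ≠ 0 := by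
    intro ij
    simp [hE, Finset.mem_filter, Finset.mem_product, Finset.mem_range, Nat.lt_succ_iff, and_assoc]
  have hEne : E.Nonempty := by
    refine ⟨(i₀, (P i₀).natDegree), (hEmem _).mpr ⟨hi₀k, hDb, ?_⟩⟩
    exact Polynomial.leadingCoeff_ne_zero.mpr hi₀
  set s₁ := E.sup (fun ij => ij.1 + D - ij.2) with hs₁
  have hsup : ∀ ij ∈ E, ij.1 + D - ij.2 ≤ s₁ :=
    fun ij h => hs₁ ▸ Finset.le_sup (f := fun ij : ℕ × ℕ => ij.1 + D - ij.2) h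
  obtain ⟨a, haE, has⟩ := Finset.exists_mem_eq_sup E hEne (fun ij => ij.1 + D - ij.2)
  have hak := (hEmem a).mp haE
  set E₁ : Finset (ℕ × ℕ) := E.filter (fun ij => ij.1 + D = s₁ + ij.2) with hE₁
  have haE₁ : a ∈ E₁ := by
    rw [hE₁, Finset.mem_filter]
    exact ⟨haE, by omega⟩
  obtain ⟨b, hbE₁, hbi⟩ := Finset.exists_mem_eq_sup E₁ ⟨a, haE₁⟩ (fun ij => ij.1)
  have hble : ∀ ij ∈ E₁, ij.1 ≤ b.1 := fun ij h => hbi ▸ Finset.le_sup h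
  have hbE : b ∈ E := (Finset.mem_filter.mp hbE₁).1
  have hbfib : b.1 + D = s₁ + b.2 := (Finset.mem_filter.mp hbE₁).2
  have hbk := (hEmem b).mp hbE
  refine ⟨s₁, by omega, ?_, ?_⟩
  · have hco : (Apoly P k D s₁).coeff b.1 = (P b.1).coeff b.2 := by
      rw [Apoly, ← Finset.sum_product', Polynomial.finset_sum_coeff]
      rw [Finset.sum_eq_single_of_mem b
        (Finset.mem_product.mpr ⟨Finset.mem_range.mpr (by omega),
          Finset.mem_range.mpr (by omega)⟩)]
      · rw [if_pos hbfib, Polynomial.coeff_C_mul, ffp_coeff_self, mul_one]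
      · intro ij hij hne
        have hij' := Finset.mem_product.mp hij
        have hijk : ij.1 ≤ k := by have := Finset.mem_range.mp hij'.1; omega
        have hijD : ij.2 ≤ D := by have := Finset.mem_range.mp hij'.2; omega
        by_cases hcond : ij.1 + D = s₁ + ij.2
        · rw [if_pos hcond, Polynomial.coeff_C_mul]
          by_cases hp : (P ij.1).coeff ij.2 = 0
          · rw [hp, zero_mul]
          · have hijE₁ : ij ∈ E₁ := Finset.mem_filter.mpr ⟨(hEmem ij).mpr ⟨hijk, hijD, hp⟩, hcond⟩
            have h1 : ij.1 ≤ b.1 := hble ij hijE₁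
            have h2 : ij.1 ≠ b.1 := by
              intro h
              exact hne (Prod.ext h (by omega))
            rw [ffp_coeff_zero _ _ _ (by omega), mul_zero]
        · rw [if_neg hcond, Polynomial.coeff_zero]
    intro h
    rw [h, Polynomial.coeff_zero] at hco
    exact hbk.2.2 hco.symm
  · intro s hs
    rw [Apoly]
    refine Finset.sum_eq_zero fun i hi => Finset.sum_eq_zero fun j hj => ?_
    by_cases hcond : i + D = s + j
    · rw [if_pos hcond]
      by_cases hp : (P i).coeff j = 0
      · rw [hp, map_zero, zero_mul]
      · exfalso
        have hik : i ≤ k := by have := Finset.mem_range.mp hi; omega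
        have hjD : j ≤ D := by have := Finset.mem_range.mp hj; omega
        have : (i, j) ∈ E := (hEmem _).mpr ⟨hik, hjD, hp⟩
        have := hsup _ this
        simp only at this
        omega
    · rw [if_neg hcond]

lemma factor_eq (m j t : ℕ) (hj : j ≤ m) :
    (((m - j : ℕ) : RatFunc ℂ) + (t : ℕ) + 1)
      = algebraMap (Polynomial ℂ) (RatFunc ℂ) (C ((m : ℂ) + ((t : ℂ) + 1 - (j : ℂ)))) := by
  have h1 : (m : ℂ) + ((t : ℂ) + 1 - (j : ℂ)) = ((m - j : ℕ) : ℂ) + (t : ℕ) + 1 := by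
    rw [Nat.cast_sub hj]; push_cast; ring
  have h2 : (C (((m - j : ℕ) : ℂ) + ((t : ℕ) : ℂ) + 1) : Polynomial ℂ)
      = ((m - j : ℕ) : Polynomial ℂ) + ((t : ℕ) : Polynomial ℂ) + 1 := by
    simp [map_add, map_one, Polynomial.C_eq_natCast]
  rw [h1, h2, map_add, map_add, map_natCast, map_natCast, map_one]

lemma recurrence (H : ℕ → RatFunc ℂ) (k D : ℕ) (P : ℕ → Polynomial (Polynomial ℂ))
    (hDb : ∀ i ≤ k, (P i).natDegree ≤ D)
    (heq : ∑ i ∈ Finset.range (k + 1),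
      toSeries (P i) * ((fun g => PowerSeries.derivative (RatFunc ℂ) g)^[i]
        (PowerSeries.mk fun n => H n)) = 0)
    (m : ℕ) (hm : D ≤ m) :
    ∑ s ∈ Finset.range (D + k + 1),
      algebraMap (Polynomial ℂ) (RatFunc ℂ) ((Apoly P k D s).eval (C (m : ℂ)))
        * H (m - D + s) = 0 := by
  have h0 : ∑ i ∈ Finset.range (k+1), (PowerSeries.coeff (R := RatFunc ℂ) m)
      (toSeries (P i) * ((fun g => PowerSeries.derivative (RatFunc ℂ) g)^[i]
        (PowerSeries.mk fun n => H n))) = 0 := by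
    rw [← map_sum, heq, map_zero]
  have hterm : ∀ i ∈ Finset.range (k+1),
      (PowerSeries.coeff (R := RatFunc ℂ) m) (toSeries (P i) *
        ((fun g => PowerSeries.derivative (RatFunc ℂ) g)^[i] (PowerSeries.mk fun n => H n)))
      = ∑ j ∈ Finset.range (D+1), algebraMap (Polynomial ℂ) (RatFunc ℂ) ((P i).coeff j) *
          ((∏ t ∈ Finset.range i, (((m - j : ℕ) : RatFunc ℂ) + t + 1)) * H (m - j + i)) := by
    intro i hi
    rw [PowerSeries.coeff_mul, Finset.Nat.sum_antidiagonal_eq_sum_range_succ_mk]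
    have h1 : ∀ j ∈ Finset.range (m+1),
        (PowerSeries.coeff (R := RatFunc ℂ) j) (toSeries (P i)) *
          (PowerSeries.coeff (R := RatFunc ℂ) (m - j)) ((fun g =>
            PowerSeries.derivative (RatFunc ℂ) g)^[i] (PowerSeries.mk fun n => H n))
        = algebraMap (Polynomial ℂ) (RatFunc ℂ) ((P i).coeff j) *
            ((∏ t ∈ Finset.range i, (((m - j : ℕ) : RatFunc ℂ) + t + 1)) * H (m - j + i)) := by
      intro j hj
      rw [coeff_iterate_deriv]
      simp [toSeries, Polynomial.coeff_coe, Polynomial.coeff_map, PowerSeries.coeff_mk]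
    rw [Finset.sum_congr rfl h1]
    refine (Finset.sum_subset (Finset.range_subset_range.mpr (by omega)) ?_).symm
    intro j hj hjD
    have hd : (P i).natDegree < j := by
      have h2 := hDb i (by have := Finset.mem_range.mp hi; omega)
      have h3 := Finset.mem_range.mp hj
      have h4 : ¬ j < D + 1 := fun h => hjD (Finset.mem_range.mpr h)
      omega
    rw [Polynomial.coeff_eq_zero_of_natDegree_lt hd, map_zero, zero_mul]
  rw [Finset.sum_congr rfl hterm, ← Finset.sum_product'] at h0
  have hmaps : ∀ ij : ℕ × ℕ, ij ∈ Finset.range (k+1) ×ˢ Finset.range (D+1) →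
      ij.1 + D - ij.2 ∈ Finset.range (D + k + 1) := by
    intro ij hij
    have := Finset.mem_range.mp (Finset.mem_product.mp hij).1
    exact Finset.mem_range.mpr (by omega)
  rw [← Finset.sum_fiberwise_of_maps_to hmaps] at h0
  rw [← h0]
  refine Finset.sum_congr rfl fun s hs => ?_
  rw [Finset.sum_filter, Apoly]
  simp only [Polynomial.eval_finset_sum, map_sum, Finset.sum_mul,
    apply_ite (Polynomial.eval (C (m:ℂ))), apply_ite (algebraMap (Polynomial ℂ) (RatFunc ℂ)),
    map_zero, Polynomial.eval_zero, ite_mul, zero_mul]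
  rw [← Finset.sum_product']
  refine Finset.sum_congr rfl fun ij hij => ?_
  obtain ⟨i, j⟩ := ij
  have hij' := Finset.mem_product.mp hij
  have hjD : j ≤ D := by have := Finset.mem_range.mp hij'.2; omega
  have hik : i ≤ k := by have := Finset.mem_range.mp hij'.1; omega
  simp only
  by_cases hcond : i + D = s + j
  · have hcond' : i + D - j = s := by omega
    rw [if_pos hcond, if_pos hcond']
    have hidx : m - j + i = m - D + s := by omega
    rw [Polynomial.eval_mul, Polynomial.eval_C, map_mul, ffp, Polynomial.eval_prod, map_prod]
    rw [Finset.prod_congr rfl (fun t _ => show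
        algebraMap (Polynomial ℂ) (RatFunc ℂ) ((X + C (C ((t : ℂ) + 1 - (j : ℂ)))).eval (C (m:ℂ)))
          = (((m - j : ℕ) : RatFunc ℂ) + (t : ℕ) + 1) from by
      rw [Polynomial.eval_add, Polynomial.eval_X, Polynomial.eval_C, ← C_add]
      exact (factor_eq m j t (le_trans hjD hm)).symm)]
    rw [hidx]
    ring
  · have hcond' : ¬ (i + D - j = s) := by omega
    rw [if_neg hcond, if_neg hcond']

lemma coeff_eval_C (A : Polynomial (Polynomial ℂ)) (w : ℂ) (c : ℕ) :
    ((A.eval (C w)).coeff c)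
      = ∑ r ∈ Finset.range (A.natDegree + 1), ((A.coeff r).coeff c) * w ^ r := by
  conv_lhs => rw [Polynomial.eval_eq_sum_range]
  rw [Polynomial.finset_sum_coeff]
  refine Finset.sum_congr rfl fun r _ => ?_
  rw [← map_pow, Polynomial.coeff_mul_C]

lemma eval_eval_C (A : Polynomial (Polynomial ℂ)) (w ζ : ℂ) :
    (A.eval (C w)).eval ζ
      = ∑ r ∈ Finset.range (A.natDegree + 1), ((A.coeff r).eval ζ) * w ^ r := by
  rw [Polynomial.eval_eq_sum_range (p := A) (C w), Polynomial.eval_finset_sum]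
  refine Finset.sum_congr rfl fun r _ => ?_
  rw [← map_pow, Polynomial.eval_mul, Polynomial.eval_C]

lemma bad_m_finite (A : Polynomial (Polynomial ℂ)) (hA : A ≠ 0) :
    ∃ M0 : ℕ, ∀ m : ℕ, M0 ≤ m → A.eval (C (m : ℂ)) ≠ 0 := by
  set c := A.leadingCoeff.natDegree with hcdef
  set q : Polynomial ℂ :=
    ∑ r ∈ Finset.range (A.natDegree + 1), C ((A.coeff r).coeff c) * X ^ r with hqdef
  have hlc : A.leadingCoeff ≠ 0 := Polynomial.leadingCoeff_ne_zero.mpr hA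
  have hAc : A.coeff A.natDegree = A.leadingCoeff := rfl
  have hcc : (A.coeff A.natDegree).coeff c ≠ 0 := by
    rw [hAc, hcdef]
    exact Polynomial.leadingCoeff_ne_zero.mpr hlc
  have hq0 : q.coeff A.natDegree = (A.coeff A.natDegree).coeff c := by
    rw [hqdef, Polynomial.finset_sum_coeff]
    simp [Polynomial.coeff_C_mul, Polynomial.coeff_X_pow]
  have hq : q ≠ 0 := by
    intro h
    rw [h, Polynomial.coeff_zero] at hq0
    exact hcc hq0.symm
  have heval : ∀ m : ℕ, A.eval (C (m : ℂ)) = 0 → q.IsRoot (m : ℂ) := by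
    intro m hm
    have h1 := coeff_eval_C A (m : ℂ) c
    rw [hm, Polynomial.coeff_zero] at h1
    rw [Polynomial.IsRoot, hqdef, Polynomial.eval_finset_sum]
    simp only [Polynomial.eval_mul, Polynomial.eval_C, Polynomial.eval_pow, Polynomial.eval_X]
    exact h1.symm
  have hfin : {m : ℕ | A.eval (C (m : ℂ)) = 0}.Finite := by
    refine (((Polynomial.finite_setOf_isRoot hq).preimage
      ((Nat.cast_injective (R := ℂ)).injOn)).subset ?_)
    intro m hm
    exact heval m hm
  obtain ⟨M, hM⟩ := hfin.bddAbove
  refine ⟨M + 1, fun m hm h => ?_⟩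
  have := hM (Set.mem_setOf_eq ▸ h : m ∈ {m : ℕ | A.eval (C (m : ℂ)) = 0})
  omega

lemma acc_subset_roots (A : Polynomial (Polynomial ℂ)) (z : ℂ)
    (hz : AccPt z (𝓟 (⋃ m : ℕ,
      {ζ : ℂ | A.eval (C (m : ℂ)) ≠ 0 ∧ (A.eval (C (m : ℂ))).eval ζ = 0}))) :
    A.leadingCoeff.eval z = 0 := by
  by_contra hzn
  set R := A.natDegree with hR
  have hzn' : (A.coeff R).eval z ≠ 0 := hzn
  set c := ‖(A.coeff R).eval z‖ / 2 with hc
  have hcpos : 0 < c := by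
    rw [hc]
    have : 0 < ‖(A.coeff R).eval z‖ := norm_pos_iff.mpr hzn'
    linarith
  have hcont : ContinuousAt (fun ζ => (A.coeff R).eval ζ) z :=
    (Polynomial.continuous _).continuousAt
  obtain ⟨δ1, hδ1pos, hδ1⟩ := Metric.continuousAt_iff.mp hcont c hcpos
  have hlow : ∀ ζ : ℂ, dist ζ z < δ1 → c ≤ ‖(A.coeff R).eval ζ‖ := by
    intro ζ hζ
    have h2 := hδ1 hζ
    rw [dist_eq_norm] at h2
    have h3 := norm_sub_norm_le ((A.coeff R).eval z) ((A.coeff R).eval ζ)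
    rw [norm_sub_rev ((A.coeff R).eval z)] at h3
    have h4 : ‖(A.coeff R).eval z‖ = 2 * c := by rw [hc]; ring
    linarith
  have hbd : ∀ r : ℕ, ∃ Cr : ℝ, 0 ≤ Cr ∧
      ∀ ζ ∈ Metric.closedBall z 1, ‖(A.coeff r).eval ζ‖ ≤ Cr := by
    intro r
    obtain ⟨Cr, hCr⟩ := (isCompact_closedBall z 1).exists_bound_of_continuousOn
      ((Polynomial.continuous _).continuousOn)
    exact ⟨max Cr 0, le_max_right _ _, fun ζ hζ => le_trans (hCr ζ hζ) (le_max_left _ _)⟩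
  choose Cb hCb0 hCb using hbd
  set Cs := ∑ r ∈ Finset.range R, Cb r with hCs
  have hCs0 : 0 ≤ Cs := Finset.sum_nonneg fun r _ => hCb0 r
  obtain ⟨M1, hM1⟩ := exists_nat_gt (Cs / c)
  have hM1' : Cs < c * M1 := by rw [div_lt_iff₀ hcpos] at hM1; linarith
  set M' := max M1 1 with hM'
  set δ := min δ1 1 with hδ
  have hδpos : 0 < δ := lt_min hδ1pos one_pos
  have hclaim : ∀ ζ : ℂ, dist ζ z < δ → ∀ m : ℕ, M' ≤ m →
      (A.eval (C (m : ℂ))).eval ζ ≠ 0 := by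
    intro ζ hζ m hm
    have hζ1 : ζ ∈ Metric.closedBall z 1 := by
      rw [Metric.mem_closedBall]
      have h5 : δ ≤ 1 := min_le_right _ _
      linarith
    have hm1 : (1 : ℝ) ≤ (m : ℝ) := by
      have : 1 ≤ m := le_trans (le_max_right _ _) hm
      exact_mod_cast this
    have hmM1 : (M1 : ℝ) ≤ (m : ℝ) := by
      have : M1 ≤ m := le_trans (le_max_left _ _) hm
      exact_mod_cast this
    rw [eval_eval_C, Finset.sum_range_succ, ← hR]
    intro h0
    have hlow' : c ≤ ‖(A.coeff R).eval ζ‖ :=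
      hlow ζ (lt_of_lt_of_le hζ (min_le_left _ _))
    by_cases hR0 : R = 0
    · rw [hR0] at h0 hlow'
      simp only [Finset.range_zero, Finset.sum_empty, pow_zero, mul_one, zero_add] at h0
      rw [h0, norm_zero] at hlow'
      linarith
    · have htop : c * (m : ℝ) ^ R ≤ ‖(A.coeff R).eval ζ * (m : ℂ) ^ R‖ := by
        rw [norm_mul, norm_pow, Complex.norm_natCast]
        exact mul_le_mul_of_nonneg_right hlow' (pow_nonneg (by positivity) _)
      have hrest : ‖∑ r ∈ Finset.range R, (A.coeff r).eval ζ * (m : ℂ) ^ r‖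
          ≤ Cs * (m : ℝ) ^ (R - 1) := by
        calc ‖∑ r ∈ Finset.range R, (A.coeff r).eval ζ * (m : ℂ) ^ r‖
            ≤ ∑ r ∈ Finset.range R, ‖(A.coeff r).eval ζ * (m : ℂ) ^ r‖ :=
              norm_sum_le _ _
          _ ≤ ∑ r ∈ Finset.range R, Cb r * (m : ℝ) ^ (R - 1) := by
              refine Finset.sum_le_sum fun r hr => ?_
              rw [norm_mul, norm_pow, Complex.norm_natCast]
              have h6 : (m : ℝ) ^ r ≤ (m : ℝ) ^ (R - 1) :=
                pow_le_pow_right₀ hm1 (by have := Finset.mem_range.mp hr; omega)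
              exact mul_le_mul (hCb r ζ hζ1) h6 (pow_nonneg (by positivity) _) (hCb0 r)
          _ = Cs * (m : ℝ) ^ (R - 1) := by rw [hCs, Finset.sum_mul]
      have heqn : ‖(A.coeff R).eval ζ * (m : ℂ) ^ R‖
          = ‖∑ r ∈ Finset.range R, (A.coeff r).eval ζ * (m : ℂ) ^ r‖ := by
        rw [eq_neg_of_add_eq_zero_right h0, norm_neg]
      have hpow : (m : ℝ) ^ R = (m : ℝ) ^ (R - 1) * m := by
        rw [← pow_succ]
        congr 1
        omega
      have hmpos : (0 : ℝ) < (m : ℝ) ^ (R - 1) := pow_pos (by linarith) _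
      have hlt : Cs * (m : ℝ) ^ (R - 1) < (c * m) * (m : ℝ) ^ (R - 1) := by
        apply mul_lt_mul_of_pos_right _ hmpos
        calc Cs < c * M1 := hM1'
          _ ≤ c * m := by
            apply mul_le_mul_of_nonneg_left hmM1 (le_of_lt hcpos)
      nlinarith [htop, hrest, heqn, hpow, hlt]
  set V := ⋃ m ∈ Finset.range M',
    {ζ : ℂ | A.eval (C (m : ℂ)) ≠ 0 ∧ (A.eval (C (m : ℂ))).eval ζ = 0} with hV
  have hVfin : V.Finite := by
    refine Set.Finite.biUnion (Finset.range M').finite_toSet fun m _ => ?_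
    by_cases hm : A.eval (C (m : ℂ)) = 0
    · refine Set.Finite.subset Set.finite_empty fun ζ hζ => ?_
      exact (hζ.1 hm).elim
    · exact (Polynomial.finite_setOf_isRoot hm).subset fun ζ hζ => hζ.2
  have hVcl : IsClosed (V \ {z}) := (hVfin.subset Set.diff_subset).isClosed
  have hmem : (Metric.ball z δ ∩ (V \ {z})ᶜ) ∈ 𝓝 z :=
    Filter.inter_mem (Metric.ball_mem_nhds z hδpos)
      (hVcl.isOpen_compl.mem_nhds (show z ∈ (V \ {z})ᶜ by simp))
  obtain ⟨y, hy, hyne⟩ := (accPt_iff_nhds).mp hz _ hmem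
  obtain ⟨⟨hyb, hyc⟩, hyU⟩ := hy
  rw [Set.mem_iUnion] at hyU
  obtain ⟨m, hm1, hm2⟩ := hyU
  have hmlt : m < M' := by
    by_contra hge
    exact hclaim y (by rwa [Metric.mem_ball] at hyb) m (by omega) hm2
  exact hyc ⟨Set.mem_biUnion (Finset.mem_range.mpr hmlt) ⟨hm1, hm2⟩, hyne⟩

end DFAux

open Polynomial Filter in
/-- If `f(x,y) = Σ_n H_n(x) yⁿ` is D-finite in `y` with rational-function coefficients
`H_n(x) ∈ ℂ(x)`, then the union `S` over all `n` of the sets of poles of the `H_n`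
(zeros of the denominator of `H_n` in lowest terms) has only finitely many
accumulation points in `ℂ`. -/
theorem dfinite_poles_finitely_many_accumulation (H : ℕ → RatFunc ℂ)
    (hD : IsDFiniteY (PowerSeries.mk fun n => H n)) :
    {z : ℂ | AccPt z (Filter.principal (⋃ n : ℕ, {ζ : ℂ | ((H n).denom).eval ζ = 0}))}.Finite := by
  obtain ⟨k, P, ⟨i₀, hi₀k, hi₀⟩, heq⟩ := hD
  set D := (Finset.range (k+1)).sup (fun i => (P i).natDegree) with hDdef
  have hDb : ∀ i ≤ k, (P i).natDegree ≤ D := by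
    intro i hi
    exact Finset.le_sup (f := fun i => (P i).natDegree) (Finset.mem_range.mpr (by omega))
  obtain ⟨s₁, hs₁le, hAne, hAzero⟩ := DFAux.exists_top k D P i₀ hi₀k hi₀ (hDb i₀ hi₀k)
  set A := DFAux.Apoly P k D s₁ with hA
  obtain ⟨M0, hM0⟩ := DFAux.bad_m_finite A hAne
  set N0 := M0 + D + k + 1 with hN0
  set U : Set ℂ := ⋃ m : ℕ,
    {ζ : ℂ | A.eval (C (m:ℂ)) ≠ 0 ∧ (A.eval (C (m:ℂ))).eval ζ = 0} with hU
  set F : Set ℂ := ⋃ j ∈ Finset.range N0, {ζ : ℂ | ((H j).denom).eval ζ = 0} with hF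
  have hFfin : F.Finite := Set.Finite.biUnion (Finset.range N0).finite_toSet
    (fun j _ => Polynomial.finite_setOf_isRoot (RatFunc.denom_ne_zero _))
  have hsub : ∀ n : ℕ, {ζ : ℂ | ((H n).denom).eval ζ = 0} ⊆ F ∪ U := by
    intro n
    induction n using Nat.strong_induction_on with
    | _ n IH =>
      by_cases hn : n < N0
      · intro ζ hζ
        exact Or.inl (Set.mem_biUnion (Finset.mem_range.mpr hn) hζ)
      · push_neg at hn
        set m := n + D - s₁ with hm
        have hms : m + s₁ = n + D := by omega
        have hmD : D ≤ m := by omega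
        have hmM0 : M0 ≤ m := by omega
        have hBm : A.eval (C (m:ℂ)) ≠ 0 := hM0 m hmM0
        have hrec := DFAux.recurrence H k D P hDb heq m hmD
        have hsub' : Finset.range (s₁+1) ⊆ Finset.range (D+k+1) :=
          Finset.range_subset_range.mpr (by omega)
        have hvan : ∀ s ∈ Finset.range (D+k+1), s ∉ Finset.range (s₁+1) →
            algebraMap (Polynomial ℂ) (RatFunc ℂ) ((DFAux.Apoly P k D s).eval (C (m:ℂ)))
              * H (m - D + s) = 0 := by
          intro s hs hs'
          have hlt : s₁ < s := by
            have h7 := Finset.mem_range.mp hs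
            have h8 : ¬ s < s₁ + 1 := fun h => hs' (Finset.mem_range.mpr h)
            omega
          rw [hAzero s hlt, Polynomial.eval_zero, map_zero, zero_mul]
        rw [← Finset.sum_subset hsub' hvan, Finset.sum_range_succ] at hrec
        have hidx : m - D + s₁ = n := by omega
        rw [hidx, ← hA] at hrec
        have hrec' : algebraMap (Polynomial ℂ) (RatFunc ℂ) (A.eval (C (m:ℂ))) * H n
            = - ∑ s ∈ Finset.range s₁, algebraMap (Polynomial ℂ) (RatFunc ℂ)
                ((DFAux.Apoly P k D s).eval (C (m:ℂ))) * H (m - D + s) :=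
          eq_neg_of_add_eq_zero_right hrec
        set q : Polynomial ℂ :=
          (A.eval (C (m:ℂ))) * ∏ s ∈ Finset.range s₁, (H (m - D + s)).denom with hq
        have hqne : q ≠ 0 := mul_ne_zero hBm
          (Finset.prod_ne_zero_iff.mpr fun s _ => RatFunc.denom_ne_zero _)
        have hmem : algebraMap (Polynomial ℂ) (RatFunc ℂ) q * H n
            ∈ (algebraMap (Polynomial ℂ) (RatFunc ℂ)).range := by
          rw [hq, map_mul, mul_comm (algebraMap (Polynomial ℂ) (RatFunc ℂ)
            (A.eval (C (m:ℂ)))), mul_assoc, hrec', mul_neg, Finset.mul_sum]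
          refine neg_mem (sum_mem fun s hs => ?_)
          have hsplit : ∏ s' ∈ Finset.range s₁, (H (m - D + s')).denom
              = (H (m - D + s)).denom * ∏ s' ∈ (Finset.range s₁).erase s,
                  (H (m - D + s')).denom :=
            (Finset.mul_prod_erase _ _ hs).symm
          refine RingHom.mem_range.mpr ⟨(DFAux.Apoly P k D s).eval (C (m:ℂ)) *
            ((∏ s' ∈ (Finset.range s₁).erase s, (H (m - D + s')).denom) *
              (H (m - D + s)).num), ?_⟩
          rw [map_mul, map_mul, ← DFAux.mul_denom_eq_num (H (m - D + s)), hsplit,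
            map_mul]
          ring
        obtain ⟨p', hp'⟩ := hmem
        have hdvd : (H n).denom ∣ q := DFAux.denom_dvd_of_mul_eq hqne hp'.symm
        intro ζ hζ
        obtain ⟨cc, hcc⟩ := hdvd
        have hq0 : q.eval ζ = 0 := by
          rw [hcc, Polynomial.eval_mul, hζ, zero_mul]
        rw [hq, Polynomial.eval_mul] at hq0
        rcases mul_eq_zero.mp hq0 with h | h
        · exact Or.inr (Set.mem_iUnion.mpr ⟨m, hBm, h⟩)
        · rw [Polynomial.eval_prod] at h
          obtain ⟨s, hs, hs0⟩ := Finset.prod_eq_zero_iff.mp h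
          have hlt : m - D + s < n := by
            have := Finset.mem_range.mp hs
            omega
          exact IH (m - D + s) hlt hs0
  have hSub2 : (⋃ n : ℕ, {ζ : ℂ | ((H n).denom).eval ζ = 0}) ⊆ F ∪ U :=
    Set.iUnion_subset hsub
  have hstep : {z : ℂ | AccPt z (Filter.principal
        (⋃ n : ℕ, {ζ : ℂ | ((H n).denom).eval ζ = 0}))}
      ⊆ {z : ℂ | A.leadingCoeff.eval z = 0} := by
    intro z hz
    have h1 : AccPt z (𝓟 (F ∪ U)) := hz.mono (principal_mono.mpr hSub2)
    rw [← Filter.sup_principal, accPt_sup] at h1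
    rcases h1 with h1 | h1
    · exact absurd h1 (DFAux.not_accPt_of_finite hFfin z)
    · exact DFAux.acc_subset_roots A z h1
  exact (Polynomial.finite_setOf_isRoot
    (Polynomial.leadingCoeff_ne_zero.mpr hAne)).subset hstep
end

section
/- For every n ≥ 0, the power series H_n(x) is a rational function of x: there exist polynomials p, q ∈ ℚ[x] with q · H_n = p (as formal power series), such that deg p ≤ deg q and q is a product of cyclotomic polynomials. -/
open scoped Classical

/-- A bond of the square lattice: `(true, a, b)` is the vertical bond from `(a,b)` to
`(a,b+1)`; `(false, a, b)` is the horizontal bond from `(a,b)` to `(a+1,b)`. -/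
abbrev Bond := Bool × ℤ × ℤ

/-- The source (south-west) endpoint of a bond. -/
def bondSrc (b : Bond) : ℤ × ℤ := b.2

/-- The target (north, resp. east) endpoint of a bond. -/
def bondTgt (b : Bond) : ℤ × ℤ :=
  if b.1 then (b.2.1, b.2.2 + 1) else (b.2.1 + 1, b.2.2)

/-- `Reaches A v w` : one may travel from `v` to `w` along bonds of `A`, taking only
north and east steps. -/
inductive Reaches (A : Finset Bond) : ℤ × ℤ → ℤ × ℤ → Prop
  | refl (v : ℤ × ℤ) : Reaches A v v
  | step {v : ℤ × ℤ} (b : Bond) (hb : b ∈ A) (hv : Reaches A v (bondSrc b)) :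
      Reaches A v (bondTgt b)

/-- A directed bond-animal, translated so that its root vertex is the origin: a nonempty
finite set of bonds such that every bond may be reached from the root by a path in `A`
taking only north and east steps.  (Each translation class of directed bond-animals has
exactly one representative whose root is the origin.) -/
def IsDirAnimal (A : Finset Bond) : Prop :=
  A.Nonempty ∧ ∀ b ∈ A, Reaches A (0, 0) (bondSrc b)

/-- Number of horizontal bonds. -/
def hcard (A : Finset Bond) : ℕ := (A.filter fun b => b.1 = false).card

/-- Number of vertical bonds. -/
def vcard (A : Finset Bond) : ℕ := (A.filter fun b => b.1 = true).card

/-- `bCount m n` : the number of directed bond-animals (up to translation) with `m`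
horizontal bonds and `n` vertical bonds. -/
noncomputable def bCount (m n : ℕ) : ℕ :=
  Set.ncard {A : Finset Bond | IsDirAnimal A ∧ hcard A = m ∧ vcard A = n}

/-- `H_n(x) = Σ_m b_{m,n} x^m`, with rational coefficients. -/
noncomputable def Hgf (n : ℕ) : PowerSeries ℚ :=
  PowerSeries.mk fun m => (bCount m n : ℚ)

namespace DBA

open Finset Polynomial

/-! ### Basic notions -/

def Valid (A : Finset Bond) : Prop := ∀ b ∈ A, Reaches A (0,0) (bondSrc b)

def colOf (b : Bond) : ℤ := b.2.1
def rowOf (b : Bond) : ℤ := b.2.2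

noncomputable def W (A : Finset Bond) : ℤ := WithBot.unbotD (-1) ((A.image colOf).max)

noncomputable def colSet (A : Finset Bond) (t : Bool) (x : ℤ) : Finset ℤ :=
  (A.filter (fun b => b.1 = t ∧ colOf b = x)).image rowOf

noncomputable def Hlast (A : Finset Bond) : Finset ℤ := colSet A false (W A)
noncomputable def Vlast (A : Finset Bond) : Finset ℤ := colSet A true (W A)

noncomputable def endState (A : Finset Bond) : Finset ℤ := if A = ∅ then {0} else Hlast A

noncomputable def rest (A : Finset Bond) : Finset Bond := A.filter (fun b => colOf b ≠ W A)

lemma endState_empty : endState (∅ : Finset Bond) = {0} := by simp [endState]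

lemma mem_colSet {A : Finset Bond} {t : Bool} {x r : ℤ} :
    r ∈ colSet A t x ↔ ((t, x, r) : Bond) ∈ A := by
  constructor
  · intro h
    obtain ⟨b, hb, hbr⟩ := Finset.mem_image.mp h
    obtain ⟨hbA, hb1, hbc⟩ := Finset.mem_filter.mp hb
    obtain ⟨t', x', y⟩ := b
    simp only [colOf, rowOf] at hb1 hbc hbr
    subst hb1; subst hbc; subst hbr; exact hbA
  · intro h
    exact Finset.mem_image.mpr ⟨(t, x, r), Finset.mem_filter.mpr ⟨h, rfl, rfl⟩, rfl⟩

/-! ### Lemmas about `W` -/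

lemma W_empty : W (∅ : Finset Bond) = -1 := by simp [W]

lemma le_W {A : Finset Bond} {b : Bond} (hb : b ∈ A) : colOf b ≤ W A := by
  have h1 : (colOf b : WithBot ℤ) ≤ (A.image colOf).max :=
    Finset.le_max (Finset.mem_image_of_mem _ hb)
  obtain ⟨m, hm⟩ := Finset.max_of_mem (Finset.mem_image_of_mem colOf hb)
  rw [hm] at h1
  simp only [W, hm, WithBot.unbotD_coe]
  exact_mod_cast h1

lemma W_le {A : Finset Bond} {c : ℤ} (hc : -1 ≤ c) (h : ∀ b ∈ A, colOf b ≤ c) : W A ≤ c := by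
  unfold W
  cases hmax : (A.image colOf).max with
  | bot => simpa using hc
  | coe m =>
    obtain ⟨b, hb, hbm⟩ := Finset.mem_image.mp (Finset.mem_of_max hmax)
    simp only [WithBot.unbotD_coe]
    exact hbm ▸ h b hb

lemma W_le' {A : Finset Bond} {c : ℤ} (hA : A ≠ ∅) (h : ∀ b ∈ A, colOf b ≤ c) : W A ≤ c := by
  obtain ⟨b, hb⟩ := Finset.nonempty_iff_ne_empty.mpr hA
  obtain ⟨m, hm⟩ := Finset.max_of_mem (Finset.mem_image_of_mem colOf hb)
  obtain ⟨b', hb', hb'm⟩ := Finset.mem_image.mp (Finset.mem_of_max hm)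
  simp only [W, hm, WithBot.unbotD_coe]
  exact hb'm ▸ h b' hb'

lemma exists_colW {A : Finset Bond} (hA : A ≠ ∅) : ∃ b ∈ A, colOf b = W A := by
  obtain ⟨b, hb⟩ := Finset.nonempty_iff_ne_empty.mpr hA
  obtain ⟨m, hm⟩ := Finset.max_of_mem (Finset.mem_image_of_mem colOf hb)
  obtain ⟨b', hb', hb'm⟩ := Finset.mem_image.mp (Finset.mem_of_max hm)
  exact ⟨b', hb', by simp [W, hm, hb'm]⟩

/-! ### Lemmas about `Reaches` -/

lemma src_le_tgt (b : Bond) : (bondSrc b).1 ≤ (bondTgt b).1 ∧ (bondSrc b).2 ≤ (bondTgt b).2 := by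
  obtain ⟨t, x, y⟩ := b
  cases t <;> simp [bondSrc, bondTgt] <;> omega

lemma reaches_mono {A B : Finset Bond} (hAB : A ⊆ B) {v w : ℤ × ℤ} (h : Reaches A v w) :
    Reaches B v w := by
  induction h with
  | refl => exact Reaches.refl _
  | step b hb hv ih => exact Reaches.step b (hAB hb) ih

lemma reaches_ge {A : Finset Bond} {v w : ℤ × ℤ} (h : Reaches A v w) :
    v.1 ≤ w.1 ∧ v.2 ≤ w.2 := by
  induction h with
  | refl => exact ⟨le_refl _, le_refl _⟩
  | step b hb hv ih => exact ⟨ih.1.trans (src_le_tgt b).1, ih.2.trans (src_le_tgt b).2⟩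

lemma reaches_localize {A : Finset Bond} {v : ℤ × ℤ} (h : Reaches A (0,0) v) :
    Reaches (A.filter fun b => (bondTgt b).1 ≤ v.1) (0,0) v := by
  induction h with
  | refl => exact Reaches.refl _
  | step b hb hv ih =>
    refine Reaches.step b (Finset.mem_filter.mpr ⟨hb, le_refl _⟩) (reaches_mono ?_ ih)
    intro b' hb'
    rw [Finset.mem_filter] at hb' ⊢
    exact ⟨hb'.1, hb'.2.trans (src_le_tgt b).1⟩

lemma reaches_inv {A : Finset Bond} {v : ℤ × ℤ} (h : Reaches A (0,0) v) :
    v = (0,0) ∨ ∃ b ∈ A, bondTgt b = v ∧ Reaches A (0,0) (bondSrc b) := by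
  cases h with
  | refl => exact Or.inl rfl
  | step b hb hv => exact Or.inr ⟨b, hb, rfl, hv⟩

lemma reaches_vbound {A : Finset Bond} {w : ℤ × ℤ} (h : Reaches A (0,0) w) :
    w.2 ≤ ((A.filter (fun b => b.1 = true ∧ rowOf b < w.2)).card : ℤ) := by
  induction h with
  | refl => simp
  | step b hb hv ih =>
    obtain ⟨t, x, y⟩ := b
    cases t with
    | false =>
      have ht : (bondTgt (false, x, y)).2 = y := by simp [bondTgt]
      have hs : (bondSrc (false, x, y)).2 = y := rfl
      rw [ht]; rw [hs] at ih; exact ih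
    | true =>
      have ht : (bondTgt (true, x, y)).2 = y + 1 := by simp [bondTgt]
      have hs : (bondSrc (true, x, y)).2 = y := rfl
      rw [ht]; rw [hs] at ih
      have hsub : A.filter (fun b' => b'.1 = true ∧ rowOf b' < y) ⊆
          A.filter (fun b' => b'.1 = true ∧ rowOf b' < y + 1) := by
        refine Finset.monotone_filter_right _ ?_
        rintro b' _ ⟨h1, h2⟩; exact ⟨h1, by omega⟩
      have hbmem : ((true, x, y) : Bond) ∈ A.filter (fun b' => b'.1 = true ∧ rowOf b' < y + 1) :=
        Finset.mem_filter.mpr ⟨hb, rfl, by simp [rowOf]⟩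
      have hbnot : ((true, x, y) : Bond) ∉ A.filter (fun b' => b'.1 = true ∧ rowOf b' < y) := by
        intro hm; have := (Finset.mem_filter.mp hm).2; simp [rowOf] at this
      have hlt : (A.filter (fun b' => b'.1 = true ∧ rowOf b' < y)).card <
          (A.filter (fun b' => b'.1 = true ∧ rowOf b' < y + 1)).card :=
        Finset.card_lt_card ⟨hsub, fun hsup => hbnot (hsup hbmem)⟩
      omega

lemma reaches_hbound {A : Finset Bond} {w : ℤ × ℤ} (h : Reaches A (0,0) w) :
    w.1 ≤ ((A.filter (fun b => b.1 = false ∧ colOf b < w.1)).card : ℤ) := by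
  induction h with
  | refl => simp
  | step b hb hv ih =>
    obtain ⟨t, x, y⟩ := b
    cases t with
    | true =>
      have ht : (bondTgt (true, x, y)).1 = x := by simp [bondTgt]
      have hs : (bondSrc (true, x, y)).1 = x := rfl
      rw [ht]; rw [hs] at ih; exact ih
    | false =>
      have ht : (bondTgt (false, x, y)).1 = x + 1 := by simp [bondTgt]
      have hs : (bondSrc (false, x, y)).1 = x := rfl
      rw [ht]; rw [hs] at ih
      have hsub : A.filter (fun b' => b'.1 = false ∧ colOf b' < x) ⊆
          A.filter (fun b' => b'.1 = false ∧ colOf b' < x + 1) := by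
        refine Finset.monotone_filter_right _ ?_
        rintro b' _ ⟨h1, h2⟩; exact ⟨h1, by omega⟩
      have hbmem : ((false, x, y) : Bond) ∈ A.filter (fun b' => b'.1 = false ∧ colOf b' < x + 1) :=
        Finset.mem_filter.mpr ⟨hb, rfl, by simp [colOf]⟩
      have hbnot : ((false, x, y) : Bond) ∉ A.filter (fun b' => b'.1 = false ∧ colOf b' < x) := by
        intro hm; have := (Finset.mem_filter.mp hm).2; simp [colOf] at this
      have hlt : (A.filter (fun b' => b'.1 = false ∧ colOf b' < x)).card <
          (A.filter (fun b' => b'.1 = false ∧ colOf b' < x + 1)).card :=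
        Finset.card_lt_card ⟨hsub, fun hsup => hbnot (hsup hbmem)⟩
      omega

lemma reaches_le_vcard {A : Finset Bond} {w : ℤ × ℤ} (h : Reaches A (0,0) w) :
    w.2 ≤ (vcard A : ℤ) := by
  refine (reaches_vbound h).trans ?_
  have : (A.filter (fun b => b.1 = true ∧ rowOf b < w.2)) ⊆ A.filter (fun b => b.1 = true) :=
    Finset.monotone_filter_right _ (fun b _ hb => hb.1)
  exact_mod_cast Finset.card_le_card this

lemma reaches_le_hcard {A : Finset Bond} {w : ℤ × ℤ} (h : Reaches A (0,0) w) :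
    w.1 ≤ (hcard A : ℤ) := by
  refine (reaches_hbound h).trans ?_
  have : (A.filter (fun b => b.1 = false ∧ colOf b < w.1)) ⊆ A.filter (fun b => b.1 = false) :=
    Finset.monotone_filter_right _ (fun b _ hb => hb.1)
  exact_mod_cast Finset.card_le_card this

lemma reaches_nonneg {A : Finset Bond} {w : ℤ × ℤ} (h : Reaches A (0,0) w) :
    0 ≤ w.1 ∧ 0 ≤ w.2 := reaches_ge h

lemma reaches_gap {A : Finset Bond} {v : ℤ × ℤ} (h : Reaches A (0,0) v) :
    0 < v.1 → ∃ r, ((false, v.1 - 1, r) : Bond) ∈ A := by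
  induction h with
  | refl => intro h0; simp at h0
  | step b hb hv ih =>
    intro h0
    obtain ⟨t, x, y⟩ := b
    cases t with
    | true =>
      have ht : (bondTgt (true, x, y)).1 = x := by simp [bondTgt]
      rw [ht] at h0 ⊢
      exact ih h0
    | false =>
      have ht : bondTgt (false, x, y) = (x + 1, y) := by simp [bondTgt]
      rw [ht]
      exact ⟨y, by simpa using hb⟩

/-! ### `Valid` and last-column decomposition -/

lemma nonneg_of_valid {A : Finset Bond} (h : Valid A) {b : Bond} (hb : b ∈ A) :
    0 ≤ colOf b ∧ 0 ≤ rowOf b := reaches_nonneg (h b hb)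

lemma W_nonneg {A : Finset Bond} (h : Valid A) (hA : A ≠ ∅) : 0 ≤ W A := by
  obtain ⟨b, hb, hbW⟩ := exists_colW hA
  exact hbW ▸ (nonneg_of_valid h hb).1

lemma valid_rest {A : Finset Bond} (h : Valid A) : Valid (rest A) := by
  intro b hb
  have hb' := Finset.mem_filter.mp hb
  have h1 := reaches_localize (h b hb'.1)
  refine reaches_mono ?_ h1
  intro b' hb'2
  rw [Finset.mem_filter] at hb'2
  refine Finset.mem_filter.mpr ⟨hb'2.1, ?_⟩
  have h2 : colOf b' ≤ (bondTgt b').1 := (src_le_tgt b').1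
  have h5 : colOf b ≤ W A := le_W hb'.1
  have h6 : colOf b ≠ W A := hb'.2
  have h3 : (bondTgt b').1 ≤ colOf b := hb'2.2
  omega

lemma Wp1 {A : Finset Bond} (h : Valid A) (hA : A ≠ ∅) : W (rest A) + 1 = W A := by
  by_cases hr : rest A = ∅
  · rw [hr, W_empty]
    obtain ⟨b, hb, hbW⟩ := exists_colW hA
    have h0 : 0 ≤ W A := W_nonneg h hA
    by_contra hne
    have hpos : 0 < W A := by omega
    obtain ⟨r, hrA⟩ := reaches_gap (h b hb) (by
      show 0 < (bondSrc b).1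
      have : (bondSrc b).1 = colOf b := rfl
      omega)
    have hcol : colOf ((false, (bondSrc b).1 - 1, r) : Bond) = W A - 1 := by
      simp [colOf]
      have : (bondSrc b).1 = colOf b := rfl
      omega
    have : ((false, (bondSrc b).1 - 1, r) : Bond) ∈ rest A :=
      Finset.mem_filter.mpr ⟨hrA, by rw [hcol]; omega⟩
    rw [hr] at this; simp at this
  · have hle : W (rest A) ≤ W A - 1 := by
      refine W_le (by have := W_nonneg h hA; omega) ?_
      intro b hb
      have hb' := Finset.mem_filter.mp hb
      have := le_W hb'.1
      have := hb'.2
      omega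
    have hWpos : 0 < W A := by
      obtain ⟨b', hb'⟩ := Finset.nonempty_iff_ne_empty.mpr hr
      have hb'2 := Finset.mem_filter.mp hb'
      have h1 := le_W hb'2.1
      have h2 := (nonneg_of_valid h hb'2.1).1
      have h3 := hb'2.2
      omega
    obtain ⟨b, hb, hbW⟩ := exists_colW hA
    obtain ⟨r, hrA⟩ := reaches_gap (h b hb) (by
      show 0 < (bondSrc b).1
      have : (bondSrc b).1 = colOf b := rfl
      omega)
    have hsrc : (bondSrc b).1 = W A := hbW
    have hmem : ((false, W A - 1, r) : Bond) ∈ rest A := by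
      refine Finset.mem_filter.mpr ⟨?_, by simp only [colOf]; omega⟩
      rw [← hsrc]; exact hrA
    have := le_W hmem
    simp only [colOf] at this
    omega

lemma endState_rest_iff {A : Finset Bond} (h : Valid A) (hA : A ≠ ∅) (r : ℤ) :
    r ∈ endState (rest A) ↔ Reaches (rest A) (0,0) (W A, r) := by
  by_cases hr : rest A = ∅
  · have hW0 : W A = 0 := by have := Wp1 h hA; rw [hr, W_empty] at this; omega
    rw [hr]
    rw [endState_empty, Finset.mem_singleton]
    constructor
    · rintro rfl; rw [hW0]; exact Reaches.refl _
    · intro hre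
      rcases reaches_inv hre with heq | ⟨b, hb, _⟩
      · have : r = 0 := by
          have := congrArg Prod.snd heq; simpa using this
        exact this
      · simp at hb
  · have hWr : W (rest A) = W A - 1 := by have := Wp1 h hA; omega
    rw [endState, if_neg hr]
    constructor
    · intro hmem
      have hb : ((false, W (rest A), r) : Bond) ∈ rest A := mem_colSet.mp hmem
      have hbr : Reaches (rest A) (0,0) (bondSrc ((false, W (rest A), r) : Bond)) :=
        valid_rest h _ hb
      have h2 := Reaches.step _ hb hbr
      have ht : bondTgt ((false, W (rest A), r) : Bond) = (W A, r) := by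
        simp [bondTgt]; omega
      rwa [ht] at h2
    · intro hre
      rcases reaches_inv hre with heq | ⟨b, hb, htgt, _⟩
      · exfalso
        have h1 := congrArg Prod.fst heq
        simp at h1
        have hWrge : 0 ≤ W (rest A) := W_nonneg (valid_rest h) hr
        omega
      · obtain ⟨t, x, y⟩ := b
        cases t with
        | true =>
          exfalso
          have hx : x = W A := by
            have := congrArg Prod.fst htgt; simpa [bondTgt] using this
          have := (Finset.mem_filter.mp hb).2
          simp only [colOf] at this
          exact this hx
        | false =>
          have hx : x + 1 = W A := by
            have := congrArg Prod.fst htgt; simpa [bondTgt] using this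
          have hy : y = r := by
            have := congrArg Prod.snd htgt; simpa [bondTgt] using this
          refine mem_colSet.mpr ?_
          have : x = W (rest A) := by omega
          rw [← this, ← hy]
          exact hb

/-! ### Column reachability -/

inductive ReachCol (R V : Finset ℤ) : ℤ → Prop
  | base (r : ℤ) (h : r ∈ R) : ReachCol R V r
  | step (r : ℤ) (hv : r ∈ V) (h : ReachCol R V r) : ReachCol R V (r+1)

def ColOK (R' V H : Finset ℤ) : Prop := ∀ r ∈ V ∪ H, ReachCol R' V r

lemma colOK_refl (R : Finset ℤ) : ColOK R ∅ R := by
  intro r hr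
  exact ReachCol.base r (by simpa using hr)

lemma colOK_empty_subset {R' H : Finset ℤ} (h : ColOK R' ∅ H) : H ⊆ R' := by
  intro r hr
  have h1 := h r (by simp [hr])
  cases h1 with
  | base _ h2 => exact h2
  | step _ hv _ => simp at hv

lemma reaches_lastcol {A : Finset Bond} (h : Valid A) (hA : A ≠ ∅) {v : ℤ × ℤ}
    (hre : Reaches A (0,0) v) (hv : v.1 = W A) :
    ReachCol (endState (rest A)) (Vlast A) v.2 := by
  revert hv
  induction hre with
  | refl =>
    intro hv
    simp only at hv
    refine ReachCol.base _ ((endState_rest_iff h hA 0).mpr ?_)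
    rw [← hv]
    exact Reaches.refl _
  | step b hb hsrc ih =>
    intro hv
    obtain ⟨t, x, y⟩ := b
    cases t with
    | true =>
      have hx : x = W A := by simpa [bondTgt] using hv
      have hyV : y ∈ Vlast A := by
        rw [Vlast, mem_colSet, ← hx]; exact hb
      have ih' := ih (by simp [bondSrc, hx])
      have : ReachCol (endState (rest A)) (Vlast A) (y + 1) := ReachCol.step y hyV ih'
      simpa [bondTgt] using this
    | false =>
      have hx : x + 1 = W A := by simpa [bondTgt] using hv
      have hbrest : ((false, x, y) : Bond) ∈ rest A :=
        Finset.mem_filter.mpr ⟨hb, by simp only [colOf]; omega⟩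
      have h1 : Reaches (rest A) (0,0) (bondSrc ((false, x, y) : Bond)) :=
        valid_rest h _ hbrest
      have h2 : Reaches (rest A) (0,0) (W A, y) := by
        have h3 := Reaches.step _ hbrest h1
        have ht : bondTgt ((false, x, y) : Bond) = (W A, y) := by simp [bondTgt]; omega
        rwa [ht] at h3
      have : ReachCol (endState (rest A)) (Vlast A) y :=
        ReachCol.base y ((endState_rest_iff h hA y).mpr h2)
      simpa [bondTgt] using this

lemma colOK_decomp {A : Finset Bond} (h : Valid A) (hA : A ≠ ∅) :
    ColOK (endState (rest A)) (Vlast A) (Hlast A) := by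
  intro r hr
  rcases Finset.mem_union.mp hr with hV | hH
  · have hb : ((true, W A, r) : Bond) ∈ A := mem_colSet.mp hV
    exact reaches_lastcol h hA (h _ hb) rfl
  · have hb : ((false, W A, r) : Bond) ∈ A := mem_colSet.mp hH
    exact reaches_lastcol h hA (h _ hb) rfl

/-! ### Gluing -/

noncomputable def glue (A' : Finset Bond) (V H : Finset ℤ) : Finset Bond :=
  A' ∪ V.image (fun r => ((true, W A' + 1, r) : Bond))
     ∪ H.image (fun r => ((false, W A' + 1, r) : Bond))

lemma subset_glue (A' : Finset Bond) (V H : Finset ℤ) : A' ⊆ glue A' V H := by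
  intro b hb
  exact Finset.mem_union_left _ (Finset.mem_union_left _ hb)

lemma mem_glue {A' : Finset Bond} {V H : Finset ℤ} {b : Bond} :
    b ∈ glue A' V H ↔ b ∈ A' ∨ (∃ r ∈ V, b = ((true, W A' + 1, r) : Bond))
      ∨ (∃ r ∈ H, b = ((false, W A' + 1, r) : Bond)) := by
  simp only [glue, Finset.mem_union, Finset.mem_image]
  constructor
  · rintro ((h | ⟨r, hr, rfl⟩) | ⟨r, hr, rfl⟩)
    · exact Or.inl h
    · exact Or.inr (Or.inl ⟨r, hr, rfl⟩)
    · exact Or.inr (Or.inr ⟨r, hr, rfl⟩)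
  · rintro (h | ⟨r, hr, rfl⟩ | ⟨r, hr, rfl⟩)
    · exact Or.inl (Or.inl h)
    · exact Or.inl (Or.inr ⟨r, hr, rfl⟩)
    · exact Or.inr ⟨r, hr, rfl⟩

lemma glue_ne_empty {A' : Finset Bond} {V H : Finset ℤ} (hne : (V ∪ H).Nonempty) :
    glue A' V H ≠ ∅ := by
  obtain ⟨r, hr⟩ := hne
  rcases Finset.mem_union.mp hr with hV | hH
  · intro h
    have : ((true, W A' + 1, r) : Bond) ∈ glue A' V H :=
      mem_glue.mpr (Or.inr (Or.inl ⟨r, hV, rfl⟩))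
    rw [h] at this; simp at this
  · intro h
    have : ((false, W A' + 1, r) : Bond) ∈ glue A' V H :=
      mem_glue.mpr (Or.inr (Or.inr ⟨r, hH, rfl⟩))
    rw [h] at this; simp at this

lemma W_glue {A' : Finset Bond} {V H : Finset ℤ} (hne : (V ∪ H).Nonempty) :
    W (glue A' V H) = W A' + 1 := by
  apply le_antisymm
  · refine W_le' (glue_ne_empty hne) ?_
    intro b hb
    rcases mem_glue.mp hb with h | ⟨r, _, rfl⟩ | ⟨r, _, rfl⟩
    · have := le_W h; omega
    · simp [colOf]
    · simp [colOf]
  · obtain ⟨r, hr⟩ := hne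
    rcases Finset.mem_union.mp hr with hV | hH
    · have : ((true, W A' + 1, r) : Bond) ∈ glue A' V H :=
        mem_glue.mpr (Or.inr (Or.inl ⟨r, hV, rfl⟩))
      have := le_W this
      simpa [colOf] using this
    · have : ((false, W A' + 1, r) : Bond) ∈ glue A' V H :=
        mem_glue.mpr (Or.inr (Or.inr ⟨r, hH, rfl⟩))
      have := le_W this
      simpa [colOf] using this

lemma colSet_glue_true {A' : Finset Bond} {V H : Finset ℤ} :
    colSet (glue A' V H) true (W A' + 1) = V := by
  ext r
  rw [mem_colSet]
  constructor
  · intro h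
    rcases mem_glue.mp h with h1 | ⟨r', hr', he⟩ | ⟨r', hr', he⟩
    · exfalso; have := le_W h1; simp only [colOf] at this; omega
    · injection he with he1 he2
      injection he2 with he3 he4
      cases he4; exact hr'
    · exact absurd (congrArg Prod.fst he) (by simp)
  · intro h
    exact mem_glue.mpr (Or.inr (Or.inl ⟨r, h, rfl⟩))

lemma colSet_glue_false {A' : Finset Bond} {V H : Finset ℤ} :
    colSet (glue A' V H) false (W A' + 1) = H := by
  ext r
  rw [mem_colSet]
  constructor
  · intro h
    rcases mem_glue.mp h with h1 | ⟨r', hr', he⟩ | ⟨r', hr', he⟩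
    · exfalso; have := le_W h1; simp only [colOf] at this; omega
    · exact absurd (congrArg Prod.fst he) (by simp)
    · injection he with he1 he2
      injection he2 with he3 he4
      cases he4; exact hr'
  · intro h
    exact mem_glue.mpr (Or.inr (Or.inr ⟨r, h, rfl⟩))

lemma endState_glue {A' : Finset Bond} {V H : Finset ℤ} (hne : (V ∪ H).Nonempty) :
    endState (glue A' V H) = H := by
  rw [endState, if_neg (glue_ne_empty hne), Hlast, W_glue hne, colSet_glue_false]

lemma Vlast_glue {A' : Finset Bond} {V H : Finset ℤ} (hne : (V ∪ H).Nonempty) :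
    Vlast (glue A' V H) = V := by
  rw [Vlast, W_glue hne, colSet_glue_true]

lemma rest_glue {A' : Finset Bond} {V H : Finset ℤ} (hne : (V ∪ H).Nonempty) :
    rest (glue A' V H) = A' := by
  rw [rest, W_glue hne]
  ext b
  rw [Finset.mem_filter]
  constructor
  · rintro ⟨hb, hcol⟩
    rcases mem_glue.mp hb with h | ⟨r, _, rfl⟩ | ⟨r, _, rfl⟩
    · exact h
    · exact absurd rfl hcol
    · exact absurd rfl hcol
  · intro hb
    refine ⟨subset_glue _ _ _ hb, ?_⟩
    have := le_W hb
    omega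

lemma hcard_glue {A' : Finset Bond} {V H : Finset ℤ} :
    hcard (glue A' V H) = hcard A' + H.card := by
  classical
  unfold hcard glue
  rw [Finset.filter_union, Finset.filter_union]
  have h1 : (V.image fun r => ((true, W A' + 1, r) : Bond)).filter (fun b => b.1 = false) = ∅ := by
    rw [Finset.filter_eq_empty_iff]
    intro b hb
    obtain ⟨r, hr, rfl⟩ := Finset.mem_image.mp hb
    simp
  have h2 : (H.image fun r => ((false, W A' + 1, r) : Bond)).filter (fun b => b.1 = false)
      = H.image fun r => ((false, W A' + 1, r) : Bond) := by
    refine Finset.filter_true_of_mem ?_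
    rintro b hb
    obtain ⟨r, hr, rfl⟩ := Finset.mem_image.mp hb
    rfl
  rw [h1, h2, Finset.union_empty]
  rw [Finset.card_union_of_disjoint]
  · congr 1
    exact Finset.card_image_of_injective _ (fun a b h => by injection h with _ h2; injection h2)
  · rw [Finset.disjoint_left]
    intro b hb hb2
    obtain ⟨r, hr, rfl⟩ := Finset.mem_image.mp hb2
    have := le_W (Finset.mem_filter.mp hb).1
    simp only [colOf] at this
    omega

lemma vcard_glue {A' : Finset Bond} {V H : Finset ℤ} :
    vcard (glue A' V H) = vcard A' + V.card := by
  classical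
  unfold vcard glue
  rw [Finset.filter_union, Finset.filter_union]
  have h1 : (H.image fun r => ((false, W A' + 1, r) : Bond)).filter (fun b => b.1 = true) = ∅ := by
    rw [Finset.filter_eq_empty_iff]
    intro b hb
    obtain ⟨r, hr, rfl⟩ := Finset.mem_image.mp hb
    simp
  have h2 : (V.image fun r => ((true, W A' + 1, r) : Bond)).filter (fun b => b.1 = true)
      = V.image fun r => ((true, W A' + 1, r) : Bond) := by
    refine Finset.filter_true_of_mem ?_
    rintro b hb
    obtain ⟨r, hr, rfl⟩ := Finset.mem_image.mp hb
    rfl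
  rw [h1, h2, Finset.union_empty]
  rw [Finset.card_union_of_disjoint]
  · congr 1
    exact Finset.card_image_of_injective _ (fun a b h => by injection h with _ h2; injection h2)
  · rw [Finset.disjoint_left]
    intro b hb hb2
    obtain ⟨r, hr, rfl⟩ := Finset.mem_image.mp hb2
    have := le_W (Finset.mem_filter.mp hb).1
    simp only [colOf] at this
    omega

lemma glue_rest {A : Finset Bond} (h : Valid A) (hA : A ≠ ∅) :
    glue (rest A) (Vlast A) (Hlast A) = A := by
  have hw : W (rest A) + 1 = W A := Wp1 h hA
  ext b
  rw [mem_glue, hw]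
  constructor
  · rintro (hb | ⟨r, hr, rfl⟩ | ⟨r, hr, rfl⟩)
    · exact (Finset.mem_filter.mp hb).1
    · exact mem_colSet.mp hr
    · exact mem_colSet.mp hr
  · intro hb
    obtain ⟨t, x, y⟩ := b
    by_cases hx : x = W A
    · subst hx
      cases t with
      | true => exact Or.inr (Or.inl ⟨y, mem_colSet.mpr hb, rfl⟩)
      | false => exact Or.inr (Or.inr ⟨y, mem_colSet.mpr hb, rfl⟩)
    · exact Or.inl (Finset.mem_filter.mpr ⟨hb, hx⟩)

lemma reachcol_to_reaches {A' : Finset Bond} {V H : Finset ℤ} {r : ℤ} (hA' : Valid A')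
    (h : ReachCol (endState A') V r) :
    Reaches (glue A' V H) (0,0) (W A' + 1, r) := by
  induction h with
  | base r hr =>
    by_cases hA'e : A' = ∅
    · subst hA'e
      rw [endState_empty, Finset.mem_singleton] at hr
      subst hr
      rw [W_empty]
      show Reaches _ (0,0) (-1 + 1, 0)
      norm_num
      exact Reaches.refl _
    · rw [endState, if_neg hA'e] at hr
      have hb : ((false, W A', r) : Bond) ∈ A' := mem_colSet.mp hr
      have h1 : Reaches A' (0,0) (bondSrc ((false, W A', r) : Bond)) := hA' _ hb
      have h2 := Reaches.step _ (subset_glue A' V H hb)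
        (reaches_mono (subset_glue A' V H) h1)
      simpa [bondTgt] using h2
  | step r hv hrc ih =>
    have hb : ((true, W A' + 1, r) : Bond) ∈ glue A' V H :=
      mem_glue.mpr (Or.inr (Or.inl ⟨r, hv, rfl⟩))
    have h2 := Reaches.step _ hb (by simpa [bondSrc] using ih)
    simpa [bondTgt] using h2

lemma valid_glue {A' : Finset Bond} {V H : Finset ℤ} (hA' : Valid A')
    (hok : ColOK (endState A') V H) :
    Valid (glue A' V H) := by
  intro b hb
  rcases mem_glue.mp hb with hbA | ⟨r, hr, rfl⟩ | ⟨r, hr, rfl⟩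
  · exact reaches_mono (subset_glue A' V H) (hA' b hbA)
  · exact reachcol_to_reaches hA' (hok r (Finset.mem_union_left _ hr))
  · exact reachcol_to_reaches hA' (hok r (Finset.mem_union_right _ hr))

/-! ### Bounds and finiteness -/

lemma endState_subset {A : Finset Bond} (h : Valid A) :
    endState A ⊆ Finset.Icc (0:ℤ) (vcard A) := by
  by_cases hA : A = ∅
  · subst hA
    intro r hr
    rw [endState_empty, Finset.mem_singleton] at hr
    subst hr
    simp [vcard]
  · rw [endState, if_neg hA]
    intro r hr
    have hb : ((false, W A, r) : Bond) ∈ A := mem_colSet.mp hr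
    have h1 := h _ hb
    have h2 := reaches_nonneg h1
    have h3 := reaches_le_vcard h1
    simp only [bondSrc] at h2 h3
    rw [Finset.mem_Icc]
    exact ⟨h2.2, h3⟩

lemma Vlast_subset {A : Finset Bond} (h : Valid A) :
    Vlast A ⊆ Finset.Icc (0:ℤ) (vcard A) := by
  intro r hr
  have hb : ((true, W A, r) : Bond) ∈ A := mem_colSet.mp hr
  have h1 := h _ hb
  have h2 := reaches_nonneg h1
  have h3 := reaches_le_vcard h1
  simp only [bondSrc] at h2 h3
  rw [Finset.mem_Icc]
  exact ⟨h2.2, h3⟩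

lemma rest_subset (A : Finset Bond) : rest A ⊆ A := Finset.filter_subset _ _

lemma vcard_rest_le (A : Finset Bond) : vcard (rest A) ≤ vcard A :=
  Finset.card_le_card (Finset.filter_subset_filter _ (rest_subset A))

lemma hcard_add_vcard (A : Finset Bond) : hcard A + vcard A = A.card := by
  classical
  rw [hcard, vcard]
  have h : A.filter (fun b => b.1 = true) = A.filter (fun b => ¬ (b.1 = false)) := by
    apply Finset.filter_congr
    intro b _
    cases hb : b.1 <;> simp [hb]
  rw [h]
  exact Finset.card_filter_add_card_filter_not _

noncomputable def box (m k : ℕ) : Finset Bond :=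
  (Finset.univ : Finset Bool) ×ˢ (Finset.Icc (0:ℤ) m ×ˢ Finset.Icc (0:ℤ) k)

lemma valid_mem_box {A : Finset Bond} {m k : ℕ} (h : Valid A) (hm : hcard A = m)
    (hk : vcard A = k) : A ⊆ box m k := by
  intro b hb
  have h1 := h b hb
  have h2 := reaches_nonneg h1
  have h3 := reaches_le_vcard h1
  have h4 := reaches_le_hcard h1
  simp only [bondSrc] at h2 h3 h4
  simp only [box, Finset.mem_product, Finset.mem_Icc, Finset.mem_univ, true_and]
  rw [hm] at h4; rw [hk] at h3
  exact ⟨⟨h2.1, h4⟩, h2.2, h3⟩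

def Sset (R : Finset ℤ) (m k : ℕ) : Set (Finset Bond) :=
  {A | Valid A ∧ hcard A = m ∧ vcard A = k ∧ endState A = R}

lemma Sset_finite (R : Finset ℤ) (m k : ℕ) : (Sset R m k).Finite := by
  apply Set.Finite.subset (Finset.finite_toSet ((box m k).powerset))
  intro A hA
  simp only [Finset.coe_powerset, Set.mem_preimage, Set.mem_powerset_iff, Finset.coe_subset]
  exact_mod_cast valid_mem_box hA.1 hA.2.1 hA.2.2.1

noncomputable def F (R : Finset ℤ) (m k : ℕ) : ℕ := (Sset R m k).ncard

def Cond (R' V R : Finset ℤ) (m k : ℕ) : Prop :=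
  ColOK R' V R ∧ (V ∪ R).Nonempty ∧ R.card ≤ m ∧ V.card ≤ k

noncomputable def I (k : ℕ) : Finset (Finset ℤ × Finset ℤ) :=
  (Finset.Icc (0:ℤ) k).powerset ×ˢ (Finset.Icc (0:ℤ) k).powerset

/-! ### The recursion -/

lemma ne_empty_of_counts {A : Finset Bond} {m k : ℕ} (hm : hcard A = m) (hk : vcard A = k)
    (h : ¬(m = 0 ∧ k = 0)) : A ≠ ∅ := by
  intro hA
  subst hA
  apply h
  constructor
  · rw [← hm]; simp [hcard]
  · rw [← hk]; simp [vcard]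

theorem F_rec (R : Finset ℤ) (m k : ℕ) (hmk : ¬(m = 0 ∧ k = 0)) :
    F R m k = ∑ p ∈ I k, if Cond p.1 p.2 R m k then F p.1 (m - R.card) (k - p.2.card) else 0 := by
  classical
  have hF : F R m k = ((Sset_finite R m k).toFinset).card :=
    Set.ncard_eq_toFinset_card _ _
  set S := (Sset_finite R m k).toFinset with hSdef
  have hSmem : ∀ A, A ∈ S ↔ (Valid A ∧ hcard A = m ∧ vcard A = k ∧ endState A = R) := by
    intro A
    rw [Set.Finite.mem_toFinset]
    rfl
  have hmem : ∀ A ∈ S, (endState (rest A), Vlast A) ∈ I k := by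
    intro A hA
    obtain ⟨hv, hm, hk, hend⟩ := (hSmem A).mp hA
    simp only [I, Finset.mem_product, Finset.mem_powerset]
    constructor
    · refine (endState_subset (valid_rest hv)).trans ?_
      refine Finset.Icc_subset_Icc (le_refl _) ?_
      exact_mod_cast hk ▸ (Nat.cast_le.mpr (vcard_rest_le A))
    · exact hk ▸ Vlast_subset hv
  rw [hF, Finset.card_eq_sum_card_fiberwise hmem]
  apply Finset.sum_congr rfl
  rintro ⟨R', V⟩ hp
  simp only
  by_cases hcond : Cond R' V R m k
  · rw [if_pos hcond]
    have hFt : F R' (m - R.card) (k - V.card) = ((Sset_finite R' (m - R.card) (k - V.card)).toFinset).card :=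
      Set.ncard_eq_toFinset_card _ _
    rw [hFt]
    apply Finset.card_bij (fun A _ => rest A)
    · -- maps to target
      rintro A hA
      rw [Finset.mem_filter] at hA
      obtain ⟨hAS, hfib⟩ := hA
      obtain ⟨hv, hm, hk, hend⟩ := (hSmem A).mp hAS
      have hAne : A ≠ ∅ := ne_empty_of_counts hm hk hmk
      have hfib1 : endState (rest A) = R' := by
        have := congrArg Prod.fst hfib; simpa using this
      have hfib2 : Vlast A = V := by
        have := congrArg Prod.snd hfib; simpa using this
      have hHlast : Hlast A = R := by
        rw [← hend, endState, if_neg hAne]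
      have hglue : glue (rest A) (Vlast A) (Hlast A) = A := glue_rest hv hAne
      have hhc : hcard A = hcard (rest A) + R.card := by
        conv_lhs => rw [← hglue]
        rw [hcard_glue, hHlast]
      have hvc : vcard A = vcard (rest A) + V.card := by
        conv_lhs => rw [← hglue]
        rw [vcard_glue, hfib2]
      rw [Set.Finite.mem_toFinset]
      refine ⟨valid_rest hv, ?_, ?_, hfib1⟩
      · omega
      · omega
    · -- injectivity
      intro A₁ h₁ A₂ h₂ heq
      rw [Finset.mem_filter] at h₁ h₂
      obtain ⟨hAS₁, hfib₁⟩ := h₁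
      obtain ⟨hAS₂, hfib₂⟩ := h₂
      obtain ⟨hv₁, hm₁, hk₁, hend₁⟩ := (hSmem A₁).mp hAS₁
      obtain ⟨hv₂, hm₂, hk₂, hend₂⟩ := (hSmem A₂).mp hAS₂
      have hAne₁ : A₁ ≠ ∅ := ne_empty_of_counts hm₁ hk₁ hmk
      have hAne₂ : A₂ ≠ ∅ := ne_empty_of_counts hm₂ hk₂ hmk
      have e₁ : glue (rest A₁) (Vlast A₁) (Hlast A₁) = A₁ := glue_rest hv₁ hAne₁
      have e₂ : glue (rest A₂) (Vlast A₂) (Hlast A₂) = A₂ := glue_rest hv₂ hAne₂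
      have hV₁ : Vlast A₁ = V := by have := congrArg Prod.snd hfib₁; simpa using this
      have hV₂ : Vlast A₂ = V := by have := congrArg Prod.snd hfib₂; simpa using this
      have hH₁ : Hlast A₁ = R := by rw [← hend₁, endState, if_neg hAne₁]
      have hH₂ : Hlast A₂ = R := by rw [← hend₂, endState, if_neg hAne₂]
      rw [← e₁, ← e₂, hV₁, hV₂, hH₁, hH₂, heq]
    · -- surjectivity
      intro A' hA'
      rw [Set.Finite.mem_toFinset] at hA'
      obtain ⟨hv', hm', hk', hend'⟩ := hA'
      obtain ⟨hok, hne, hcm, hck⟩ := hcond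
      have hneVR : (V ∪ R).Nonempty := hne
      refine ⟨glue A' V R, ?_, rest_glue hneVR⟩
      rw [Finset.mem_filter]
      constructor
      · rw [hSmem]
        refine ⟨valid_glue hv' (hend' ▸ hok), ?_, ?_, endState_glue hneVR⟩
        · rw [hcard_glue, hm']; omega
        · rw [vcard_glue, hk']; omega
      · rw [rest_glue hneVR, Vlast_glue hneVR, hend']
  · rw [if_neg hcond]
    rw [Finset.card_eq_zero]
    rw [Finset.filter_eq_empty_iff]
    intro A hA
    intro hfib
    apply hcond
    obtain ⟨hv, hm, hk, hend⟩ := (hSmem A).mp hA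
    have hAne : A ≠ ∅ := ne_empty_of_counts hm hk hmk
    have hfib1 : endState (rest A) = R' := by
      have := congrArg Prod.fst hfib; simpa using this
    have hfib2 : Vlast A = V := by
      have := congrArg Prod.snd hfib; simpa using this
    have hHlast : Hlast A = R := by rw [← hend, endState, if_neg hAne]
    have hglue : glue (rest A) (Vlast A) (Hlast A) = A := glue_rest hv hAne
    have hhc : hcard A = hcard (rest A) + R.card := by
      conv_lhs => rw [← hglue]
      rw [hcard_glue, hHlast]
    have hvc : vcard A = vcard (rest A) + V.card := by
      conv_lhs => rw [← hglue]
      rw [vcard_glue, hfib2]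
    refine ⟨?_, ?_, by omega, by omega⟩
    · rw [← hfib1, ← hfib2, ← hHlast]
      exact colOK_decomp hv hAne
    · obtain ⟨b, hb, hbW⟩ := exists_colW hAne
      obtain ⟨t, x, y⟩ := b
      cases t with
      | true =>
        refine ⟨y, Finset.mem_union_left _ ?_⟩
        rw [← hfib2, Vlast, mem_colSet]
        simp only [colOf] at hbW
        rw [← hbW]; exact hb
      | false =>
        refine ⟨y, Finset.mem_union_right _ ?_⟩
        rw [← hHlast, Hlast, mem_colSet]
        simp only [colOf] at hbW
        rw [← hbW]; exact hb

theorem F_base (R : Finset ℤ) : F R 0 0 = if R = {0} then 1 else 0 := by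
  classical
  by_cases hR : R = {0}
  · subst hR
    rw [if_pos rfl]
    have : Sset {0} 0 0 = {(∅ : Finset Bond)} := by
      ext A
      simp only [Sset, Set.mem_setOf_eq, Set.mem_singleton_iff]
      constructor
      · rintro ⟨hv, hm, hk, hend⟩
        have : A.card = 0 := by rw [← hcard_add_vcard A, hm, hk]
        exact Finset.card_eq_zero.mp this
      · rintro rfl
        refine ⟨?_, by simp [hcard], by simp [vcard], endState_empty⟩
        intro b hb; simp at hb
    rw [F, this, Set.ncard_singleton]
  · rw [if_neg hR]
    have : Sset R 0 0 = ∅ := by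
      ext A
      simp only [Sset, Set.mem_setOf_eq, Set.mem_empty_iff_false, iff_false]
      rintro ⟨hv, hm, hk, hend⟩
      have : A.card = 0 := by rw [← hcard_add_vcard A, hm, hk]
      have hAe : A = ∅ := Finset.card_eq_zero.mp this
      subst hAe
      apply hR
      rw [← hend, endState_empty]
    rw [F, this, Set.ncard_empty]

theorem F_out {R : Finset ℤ} {m k : ℕ} (h : ¬ R ⊆ Finset.Icc (0:ℤ) k) : F R m k = 0 := by
  have : Sset R m k = ∅ := by
    ext A
    simp only [Sset, Set.mem_setOf_eq, Set.mem_empty_iff_false, iff_false]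
    rintro ⟨hv, hm, hk, hend⟩
    exact h (hend ▸ hk ▸ endState_subset hv)
  rw [F, this, Set.ncard_empty]

/-! ### Power series -/

noncomputable def FS (R : Finset ℤ) (k : ℕ) : PowerSeries ℚ :=
  PowerSeries.mk fun m => (F R m k : ℚ)

theorem FS_eq (R : Finset ℤ) (k : ℕ) :
    FS R k = (if R = {0} ∧ k = 0 then 1 else 0)
      + ∑ p ∈ I k, if ColOK p.1 p.2 R ∧ (p.2 ∪ R).Nonempty ∧ p.2.card ≤ k
          then PowerSeries.X ^ R.card * FS p.1 (k - p.2.card) else 0 := by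
  ext m
  rw [map_add, map_sum]
  have hδ : (PowerSeries.coeff m) (if R = {0} ∧ k = 0 then (1 : PowerSeries ℚ) else 0)
      = if R = {0} ∧ k = 0 ∧ m = 0 then 1 else 0 := by
    split_ifs with h1 h2 h3
    · rw [PowerSeries.coeff_one, if_pos h2.2.2]
    · rw [PowerSeries.coeff_one, if_neg (by tauto)]
    · exact absurd ⟨h3.1, h3.2.1⟩ h1
    · simp
  rw [hδ]
  have hterm : ∀ p ∈ I k,
      (PowerSeries.coeff m) (if ColOK p.1 p.2 R ∧ (p.2 ∪ R).Nonempty ∧ p.2.card ≤ k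
          then PowerSeries.X ^ R.card * FS p.1 (k - p.2.card) else 0)
      = if (ColOK p.1 p.2 R ∧ (p.2 ∪ R).Nonempty ∧ p.2.card ≤ k) ∧ R.card ≤ m
          then (F p.1 (m - R.card) (k - p.2.card) : ℚ) else 0 := by
    intro p _
    split_ifs with h1 h2 h3
    · rw [PowerSeries.coeff_X_pow_mul', if_pos h2.2]
      simp [FS]
    · rw [PowerSeries.coeff_X_pow_mul', if_neg (by tauto)]
    · exact absurd h3.1 h1
    · simp
  rw [Finset.sum_congr rfl hterm]
  simp only [FS, PowerSeries.coeff_mk]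
  by_cases hmk : m = 0 ∧ k = 0
  · obtain ⟨rfl, rfl⟩ := hmk
    rw [F_base]
    have hsum : ∑ p ∈ I 0, (if (ColOK p.1 p.2 R ∧ (p.2 ∪ R).Nonempty ∧ p.2.card ≤ 0) ∧ R.card ≤ 0
        then (F p.1 (0 - R.card) (0 - p.2.card) : ℚ) else 0) = 0 := by
      apply Finset.sum_eq_zero
      intro p _
      rw [if_neg]
      rintro ⟨⟨_, hne, hV⟩, hR⟩
      have hVe : p.2 = ∅ := Finset.card_eq_zero.mp (by omega)
      have hRe : R = ∅ := Finset.card_eq_zero.mp (by omega)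
      rw [hVe, hRe] at hne
      simp at hne
    rw [hsum, add_zero]
    split_ifs with h1 h2 h3
    · simp
    · exact absurd ⟨h1, rfl, rfl⟩ h2
    · exact absurd h3.1 h1
    · simp
  · rw [F_rec R m k hmk]
    have hδ0 : (if R = {0} ∧ k = 0 ∧ m = 0 then (1:ℚ) else 0) = 0 := by
      rw [if_neg]; tauto
    rw [hδ0, zero_add]
    rw [Nat.cast_sum]
    apply Finset.sum_congr rfl
    rintro ⟨R', V⟩ _
    simp only
    rw [apply_ite (fun n : ℕ => (n : ℚ))]
    rw [Nat.cast_zero]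
    apply if_congr _ rfl rfl
    unfold Cond
    tauto

/-! ### Rationality -/

def Good (f : PowerSeries ℚ) : Prop :=
  ∃ p q : Polynomial ℚ, (q : PowerSeries ℚ) * f = p ∧ p.degree < q.degree ∧
    ∃ l : Multiset ℕ, (∀ j ∈ l, j ≠ 0) ∧ q = (l.map fun j => cyclotomic j ℚ).prod

lemma cycloProd_monic (l : Multiset ℕ) : ((l.map fun j => cyclotomic j ℚ).prod).Monic :=
  monic_multiset_prod_of_monic _ _ (fun j _ => cyclotomic.monic _ _)

lemma good_zero : Good 0 := by
  refine ⟨0, 1, by simp, ?_, 0, by simp, by simp⟩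
  rw [degree_zero, degree_one]
  exact WithBot.bot_lt_coe 0

lemma good_add {f g : PowerSeries ℚ} (hf : Good f) (hg : Good g) : Good (f + g) := by
  obtain ⟨p1, q1, h1, d1, l1, hl1, hq1⟩ := hf
  obtain ⟨p2, q2, h2, d2, l2, hl2, hq2⟩ := hg
  have hm1 : q1.Monic := hq1 ▸ cycloProd_monic l1
  have hm2 : q2.Monic := hq2 ▸ cycloProd_monic l2
  refine ⟨p1 * q2 + p2 * q1, q1 * q2, ?_, ?_, l1 + l2, ?_, ?_⟩
  · have e : ((q1 * q2 : Polynomial ℚ) : PowerSeries ℚ) * (f + g)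
        = (q2 : PowerSeries ℚ) * ((q1 : PowerSeries ℚ) * f)
          + (q1 : PowerSeries ℚ) * ((q2 : PowerSeries ℚ) * g) := by
      rw [Polynomial.coe_mul]; ring
    rw [e, h1, h2, Polynomial.coe_add, Polynomial.coe_mul, Polynomial.coe_mul]
    ring
  · refine lt_of_le_of_lt (degree_add_le _ _) (max_lt ?_ ?_)
    · rw [degree_mul, degree_mul]
      exact WithBot.add_lt_add_right (fun h => hm2.ne_zero (degree_eq_bot.mp h)) d1
    · rw [degree_mul, degree_mul, add_comm q1.degree q2.degree]
      exact WithBot.add_lt_add_right (fun h => hm1.ne_zero (degree_eq_bot.mp h)) d2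
  · intro j hj
    rcases Multiset.mem_add.mp hj with h | h
    · exact hl1 j h
    · exact hl2 j h
  · rw [Multiset.map_add, Multiset.prod_add, ← hq1, ← hq2]

lemma good_sum {α : Type*} {s : Finset α} {f : α → PowerSeries ℚ}
    (h : ∀ a ∈ s, Good (f a)) : Good (∑ a ∈ s, f a) :=
  Finset.sum_induction f Good (fun _ _ => good_add) good_zero h

lemma good_step {f g : PowerSeries ℚ} {a : ℕ} (ha : a ≠ 0) {D : Polynomial ℚ}
    (hD : D.degree ≤ 0) (hg : Good g)
    (h : f = (D : PowerSeries ℚ) + PowerSeries.X ^ a * (g + f)) : Good f := by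
  obtain ⟨p, q, hpq, hdeg, l, hl, hq⟩ := hg
  have hmq : q.Monic := hq ▸ cycloProd_monic l
  have hq0 : q.degree ≠ ⊥ := fun hb => hmq.ne_zero (degree_eq_bot.mp hb)
  refine ⟨-(D * q) - (X : Polynomial ℚ)^a * p, ((X : Polynomial ℚ)^a - 1) * q, ?_, ?_, ?_, ?_, ?_⟩
  · have hXa : (((X : Polynomial ℚ)^a - 1 : Polynomial ℚ) : PowerSeries ℚ)
        = (PowerSeries.X : PowerSeries ℚ)^a - 1 := by
      rw [Polynomial.coe_sub, Polynomial.coe_pow, Polynomial.coe_one, Polynomial.coe_X]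
    have key : ((PowerSeries.X : PowerSeries ℚ)^a - 1) * f
        = -(D : PowerSeries ℚ) - PowerSeries.X^a * g := by
      linear_combination (-1 : PowerSeries ℚ) * h
    calc ((((X : Polynomial ℚ)^a - 1) * q : Polynomial ℚ) : PowerSeries ℚ) * f
        = (q : PowerSeries ℚ) * ((((PowerSeries.X : PowerSeries ℚ)^a - 1)) * f) := by
          rw [Polynomial.coe_mul, hXa]; ring
      _ = (q : PowerSeries ℚ) * (-(D : PowerSeries ℚ) - PowerSeries.X^a * g) := by rw [key]
      _ = -((D : PowerSeries ℚ) * (q : PowerSeries ℚ))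
            - PowerSeries.X^a * ((q : PowerSeries ℚ) * g) := by ring
      _ = ((-(D * q) - (X : Polynomial ℚ)^a * p : Polynomial ℚ) : PowerSeries ℚ) := by
          rw [hpq, Polynomial.coe_sub, Polynomial.coe_neg, Polynomial.coe_mul,
            Polynomial.coe_mul, Polynomial.coe_pow, Polynomial.coe_X]
  · have hdq : (((X : Polynomial ℚ)^a - 1) * q).degree = (a : WithBot ℕ) + q.degree := by
      rw [degree_mul]
      congr 1
      have : ((X : Polynomial ℚ)^a - 1) = (X : Polynomial ℚ)^a - C 1 := by rw [map_one]
      rw [this, degree_X_pow_sub_C (Nat.pos_of_ne_zero ha)]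
    rw [hdq]
    refine lt_of_le_of_lt (degree_sub_le _ _) (max_lt ?_ ?_)
    · rw [degree_neg, degree_mul]
      calc D.degree + q.degree ≤ 0 + q.degree := add_le_add_left hD _
        _ = q.degree := zero_add _
        _ < (a : WithBot ℕ) + q.degree := by
            obtain ⟨nd, hnd⟩ : ∃ nd : ℕ, q.degree = (nd : WithBot ℕ) := by
              cases hqd : q.degree with
              | bot => exact absurd hqd hq0
              | coe nd => exact ⟨nd, rfl⟩
            rw [hnd]
            exact_mod_cast Nat.lt_add_of_pos_left (Nat.pos_of_ne_zero ha)
    · rw [degree_mul, degree_X_pow]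
      refine WithBot.add_lt_add_left ?_ hdeg
      simp
  · exact l + (a.divisors).val
  · intro j hj
    rcases Multiset.mem_add.mp hj with h' | h'
    · exact hl j h'
    · exact Nat.pos_of_mem_divisors h' |>.ne'
  · rw [Multiset.map_add, Multiset.prod_add, ← hq]
    rw [mul_comm]
    congr 1
    rw [← Finset.prod_eq_multiset_prod]
    exact (prod_cyclotomic_eq_X_pow_sub_one (Nat.pos_of_ne_zero ha) ℚ).symm

theorem good_FS : ∀ k : ℕ, ∀ R : Finset ℤ, Good (FS R k) := by
  intro k
  induction k using Nat.strong_induction_on with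
  | _ k ihk =>
  suffices H : ∀ d : ℕ, ∀ R : Finset ℤ, (Finset.Icc (0:ℤ) (k:ℤ)).card - R.card < d → Good (FS R k) by
    exact fun R => H ((Finset.Icc (0:ℤ) (k:ℤ)).card + 1) R (by omega)
  intro d
  induction d with
  | zero => intro R h; omega
  | succ d ihd =>
    intro R hfuel
    by_cases hRI : R ⊆ Finset.Icc (0:ℤ) (k:ℤ)
    swap
    · have hz : FS R k = 0 := by
        ext m
        simp [FS, F_out hRI]
      rw [hz]; exact good_zero
    by_cases hRne : R.Nonempty
    · -- main case: nonempty R inside the box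
      have hsid := FS_eq R k
      have hself_mem : ((R, (∅ : Finset ℤ)) : Finset ℤ × Finset ℤ) ∈ I k := by
        simp only [I, Finset.mem_product, Finset.mem_powerset]
        exact ⟨hRI, Finset.empty_subset _⟩
      rw [← Finset.add_sum_erase _ _ hself_mem] at hsid
      have hsc : ColOK ((R, (∅:Finset ℤ)).1) ((R, (∅:Finset ℤ)).2) R
          ∧ (((R, (∅:Finset ℤ)).2 ∪ R)).Nonempty ∧ ((R, (∅:Finset ℤ)).2).card ≤ k := by
        refine ⟨colOK_refl R, by simpa using hRne, by simp⟩
      rw [if_pos hsc] at hsid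
      simp only at hsid
      have hfac : ∑ p ∈ (I k).erase (R, (∅:Finset ℤ)),
            (if ColOK p.1 p.2 R ∧ (p.2 ∪ R).Nonempty ∧ p.2.card ≤ k
              then PowerSeries.X ^ R.card * FS p.1 (k - p.2.card) else 0)
          = PowerSeries.X ^ R.card * ∑ p ∈ (I k).erase (R, (∅:Finset ℤ)),
            (if ColOK p.1 p.2 R ∧ (p.2 ∪ R).Nonempty ∧ p.2.card ≤ k
              then FS p.1 (k - p.2.card) else 0) := by
        rw [Finset.mul_sum]
        refine Finset.sum_congr rfl (fun p _ => ?_)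
        rw [mul_ite, mul_zero]
      rw [hfac] at hsid
      set G := ∑ p ∈ (I k).erase (R, (∅:Finset ℤ)),
          (if ColOK p.1 p.2 R ∧ (p.2 ∪ R).Nonempty ∧ p.2.card ≤ k
            then FS p.1 (k - p.2.card) else 0) with hGdef
      have hGood : Good G := by
        refine good_sum ?_
        rintro ⟨R', V⟩ hp
        rw [Finset.mem_erase] at hp
        obtain ⟨hpne, hpI⟩ := hp
        by_cases hc : ColOK R' V R ∧ (V ∪ R).Nonempty ∧ V.card ≤ k
        swap
        · rw [if_neg (by exact hc)]; exact good_zero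
        rw [if_pos (by exact hc)]
        by_cases hV : V = ∅
        · subst hV
          have hsub : R ⊆ R' := colOK_empty_subset hc.1
          have hne : R ≠ R' := by
            intro h; apply hpne; rw [h]
          have hss : R ⊂ R' := ⟨hsub, fun h => hne (le_antisymm hsub h)⟩
          have hcard : R.card < R'.card := Finset.card_lt_card hss
          have hle : R'.card ≤ (Finset.Icc (0:ℤ) (k:ℤ)).card := by
            apply Finset.card_le_card
            simp only [I, Finset.mem_product, Finset.mem_powerset] at hpI
            exact hpI.1
          simp only [Finset.card_empty, Nat.sub_zero]
          exact ihd R' (by omega)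
        · have hVpos : 0 < V.card := Finset.card_pos.mpr (Finset.nonempty_iff_ne_empty.mpr hV)
          have hkpos : 0 < k := lt_of_lt_of_le hVpos hc.2.2
          exact ihk (k - V.card) (by omega) R'
      have haz : R.card ≠ 0 := by
        simp [Finset.card_eq_zero]
        exact Finset.nonempty_iff_ne_empty.mp hRne
      refine good_step haz (D := if R = {0} ∧ k = 0 then 1 else 0) ?_ hGood ?_
      · split_ifs
        · exact le_of_eq degree_one
        · rw [degree_zero]; exact bot_le
      · have hcoe : (if R = {0} ∧ k = 0 then (1:PowerSeries ℚ) else 0)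
            = ((if R = {0} ∧ k = 0 then (1:Polynomial ℚ) else 0 : Polynomial ℚ) : PowerSeries ℚ) := by
          split_ifs
          · rw [Polynomial.coe_one]
          · rw [Polynomial.coe_zero]
        rw [hcoe] at hsid
        simp only [Finset.card_empty, Nat.sub_zero] at hsid
        linear_combination hsid
    · -- R = ∅
      have hRe : R = ∅ := Finset.not_nonempty_iff_eq_empty.mp hRne
      subst hRe
      have hsid := FS_eq (∅ : Finset ℤ) k
      have hδ : (if (∅ : Finset ℤ) = {0} ∧ k = 0 then (1:PowerSeries ℚ) else 0) = 0 := by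
        rw [if_neg]
        rintro ⟨h, _⟩
        exact (Finset.singleton_ne_empty (0:ℤ)) h.symm
      rw [hδ, zero_add] at hsid
      rw [hsid]
      refine good_sum ?_
      rintro ⟨R', V⟩ _
      by_cases hc : ColOK R' V ∅ ∧ (V ∪ ∅).Nonempty ∧ V.card ≤ k
      swap
      · rw [if_neg (by exact hc)]; exact good_zero
      rw [if_pos (by exact hc)]
      have hVne : V.Nonempty := by
        have := hc.2.1
        simpa using this
      have hVpos : 0 < V.card := Finset.card_pos.mpr hVne
      have hkpos : 0 < k := lt_of_lt_of_le hVpos hc.2.2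
      simp only [Finset.card_empty, pow_zero, one_mul]
      exact ihk (k - V.card) (by omega) R'

/-! ### Relating `Hgf` to `FS` -/

def Uset (m n : ℕ) : Set (Finset Bond) :=
  {A | Valid A ∧ hcard A = m ∧ vcard A = n}

lemma Uset_finite (m n : ℕ) : (Uset m n).Finite := by
  apply Set.Finite.subset (Finset.finite_toSet ((box m n).powerset))
  intro A hA
  simp only [Finset.coe_powerset, Set.mem_preimage, Set.mem_powerset_iff, Finset.coe_subset]
  exact_mod_cast valid_mem_box hA.1 hA.2.1 hA.2.2

theorem bCount_split (m n : ℕ) :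
    (bCount m n : ℚ) = (∑ R ∈ (Finset.Icc (0:ℤ) (n:ℤ)).powerset, (F R m n : ℚ))
      - (if m = 0 ∧ n = 0 then 1 else 0) := by
  classical
  by_cases hmn : m = 0 ∧ n = 0
  · obtain ⟨rfl, rfl⟩ := hmn
    have hb : bCount 0 0 = 0 := by
      rw [bCount]
      have : {A : Finset Bond | IsDirAnimal A ∧ hcard A = 0 ∧ vcard A = 0} = ∅ := by
        ext A
        simp only [Set.mem_setOf_eq, Set.mem_empty_iff_false, iff_false]
        rintro ⟨⟨hne, _⟩, hm, hk⟩
        have : A.card = 0 := by rw [← hcard_add_vcard A, hm, hk]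
        rw [Finset.card_eq_zero.mp this] at hne
        simp at hne
      rw [this, Set.ncard_empty]
    rw [hb, if_pos ⟨rfl, rfl⟩]
    have hsum : ∑ R ∈ (Finset.Icc (0:ℤ) ((0:ℕ):ℤ)).powerset, ((F R 0 0 : ℚ))
        = 1 := by
      have he : ∀ R ∈ (Finset.Icc (0:ℤ) ((0:ℕ):ℤ)).powerset,
          (F R 0 0 : ℚ) = if R = {0} then 1 else 0 := by
        intro R _
        rw [F_base]
        split_ifs <;> simp
      rw [Finset.sum_congr rfl he]
      rw [Finset.sum_ite_eq']
      simp
    rw [hsum]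
    norm_num
  · rw [if_neg hmn, sub_zero]
    have hEq : {A : Finset Bond | IsDirAnimal A ∧ hcard A = m ∧ vcard A = n} = Uset m n := by
      ext A
      simp only [Set.mem_setOf_eq, IsDirAnimal, Uset]
      constructor
      · rintro ⟨⟨_, hv⟩, hm, hk⟩; exact ⟨hv, hm, hk⟩
      · rintro ⟨hv, hm, hk⟩
        refine ⟨⟨Finset.nonempty_iff_ne_empty.mpr (ne_empty_of_counts hm hk hmn), hv⟩, hm, hk⟩
    rw [bCount, hEq]
    have hcardU : (Uset m n).ncard = ∑ R ∈ (Finset.Icc (0:ℤ) (n:ℤ)).powerset, F R m n := by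
      rw [Set.ncard_eq_toFinset_card _ (Uset_finite m n)]
      have hmem : ∀ A ∈ (Uset_finite m n).toFinset,
          endState A ∈ (Finset.Icc (0:ℤ) (n:ℤ)).powerset := by
        intro A hA
        rw [Set.Finite.mem_toFinset] at hA
        obtain ⟨hv, _, hk⟩ := hA
        rw [Finset.mem_powerset]
        exact hk ▸ endState_subset hv
      rw [Finset.card_eq_sum_card_fiberwise hmem]
      apply Finset.sum_congr rfl
      intro R _
      have : (Uset_finite m n).toFinset.filter (fun A => endState A = R)
          = (Sset_finite R m n).toFinset := by
        ext A
        simp only [Finset.mem_filter, Set.Finite.mem_toFinset]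
        constructor
        · rintro ⟨⟨hv, hm, hk⟩, hend⟩; exact ⟨hv, hm, hk, hend⟩
        · rintro ⟨hv, hm, hk, hend⟩; exact ⟨⟨hv, hm, hk⟩, hend⟩
      rw [this, ← Set.ncard_eq_toFinset_card _ (Sset_finite R m n)]
      rfl
    rw [hcardU]
    push_cast
    rfl

theorem Hgf_eq (n : ℕ) :
    Hgf n = (∑ R ∈ (Finset.Icc (0:ℤ) (n:ℤ)).powerset, FS R n)
      - (if n = 0 then 1 else 0) := by
  ext m
  rw [map_sub, map_sum]
  have h1 : (PowerSeries.coeff m) (Hgf n) = (bCount m n : ℚ) := by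
    simp [Hgf]
  have h2 : ∀ R, (PowerSeries.coeff m) (FS R n) = (F R m n : ℚ) := by
    intro R; simp [FS]
  rw [h1, bCount_split]
  congr 1
  · exact (Finset.sum_congr rfl (fun R _ => (h2 R).symm))
  · by_cases hn : n = 0
    · subst hn
      rw [if_pos rfl, PowerSeries.coeff_one]
      by_cases hm : m = 0
      · subst hm; rw [if_pos rfl, if_pos ⟨rfl, rfl⟩]
      · rw [if_neg hm, if_neg (by tauto)]
    · rw [if_neg hn, if_neg (by tauto), map_zero]

end DBA

/-- For every `n`, `H_n(x)` is a rational function of `x`: there are polynomials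
`p, q ∈ ℚ[x]` with `q · H_n = p` as formal power series, `deg p ≤ deg q`, and `q` a
product of cyclotomic polynomials. -/
theorem Hn_is_rational_with_cyclotomic_denominator (n : ℕ) :
    ∃ p q : Polynomial ℚ,
      (q : PowerSeries ℚ) * Hgf n = (p : PowerSeries ℚ) ∧
      p.degree ≤ q.degree ∧
      ∃ l : Multiset ℕ, (∀ k ∈ l, k ≠ 0) ∧
        q = (l.map fun k => Polynomial.cyclotomic k ℚ).prod := by
  classical
  have hG : DBA.Good (∑ R ∈ (Finset.Icc (0:ℤ) (n:ℤ)).powerset, DBA.FS R n) :=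
    DBA.good_sum (fun R _ => DBA.good_FS n R)
  obtain ⟨p, q, hpq, hdeg, l, hl, hq⟩ := hG
  refine ⟨p - (if n = 0 then q else 0), q, ?_, ?_, l, hl, hq⟩
  · rw [DBA.Hgf_eq, mul_sub, hpq]
    have : (q : PowerSeries ℚ) * (if n = 0 then 1 else 0)
        = ((if n = 0 then q else 0 : Polynomial ℚ) : PowerSeries ℚ) := by
      split_ifs
      · rw [mul_one]
      · rw [mul_zero, Polynomial.coe_zero]
    rw [this, ← Polynomial.coe_sub]
  · refine le_trans (Polynomial.degree_sub_le _ _) (max_le (le_of_lt hdeg) ?_)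
    split_ifs
    · exact le_refl _
    · rw [Polynomial.degree_zero]; exact bot_le
end

section
/- For every complex number z with |z| < 1, the series Σ_{n≥1} zⁿ / ((1−zⁿ)(1−z^{n+1})) converges and equals z/(1−z)². -/
/-- For every complex `z` with `|z| < 1`, the series
`Σ_{n≥1} zⁿ/((1−zⁿ)(1−z^{n+1}))` converges and its sum equals `z/(1−z)²`.
(The summand indexed by `n : ℕ` below corresponds to the term `n + 1 ≥ 1`.) -/
theorem sum_zn_div_eq (z : ℂ) (hz : ‖z‖ < 1) :
    HasSum (fun n : ℕ => z ^ (n + 1) / ((1 - z ^ (n + 1)) * (1 - z ^ (n + 2))))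
      (z / (1 - z) ^ 2) := by
  set f : ℕ → ℂ := fun n => z ^ (n + 1) / ((1 - z ^ (n + 1)) * (1 - z ^ (n + 2))) with hf
  have hzn : ∀ k : ℕ, ‖z ^ (k + 1)‖ < 1 := by
    intro k
    rw [norm_pow]
    exact pow_lt_one₀ (norm_nonneg z) hz (Nat.succ_ne_zero k)
  have hne : ∀ k : ℕ, (1 : ℂ) - z ^ (k + 1) ≠ 0 := by
    intro k h
    rw [sub_eq_zero] at h
    have := hzn k
    rw [← h] at this
    simp at this
  have hz1 : (1 : ℂ) - z ≠ 0 := by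
    have := hne 0; simpa using this
  have hlb : ∀ k : ℕ, 1 - ‖z‖ ≤ ‖(1 : ℂ) - z ^ (k + 1)‖ := by
    intro k
    calc 1 - ‖z‖ ≤ 1 - ‖z ^ (k + 1)‖ := by
          have : ‖z ^ (k + 1)‖ ≤ ‖z‖ := by
            rw [norm_pow]
            exact pow_le_of_le_one (norm_nonneg z) hz.le (Nat.succ_ne_zero k)
          linarith
      _ ≤ ‖(1 : ℂ) - z ^ (k + 1)‖ := by
          have := norm_sub_norm_le (1 : ℂ) (z ^ (k + 1))
          simpa using this
  have hpos : (0 : ℝ) < 1 - ‖z‖ := by linarith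
  -- summability by comparison with geometric series
  have hsum : Summable f := by
    apply Summable.of_norm_bounded
      (g := fun n => (‖z‖ * ‖z‖ ^ n) / ((1 - ‖z‖) * (1 - ‖z‖)))
    · exact (((summable_geometric_of_lt_one (norm_nonneg z) hz).mul_left ‖z‖).div_const _)
    · intro n
      rw [hf]
      simp only [norm_div, norm_mul, norm_pow]
      have h1 := hlb n
      have h2 := hlb (n + 1)
      have : ‖z‖ ^ (n + 1) = ‖z‖ * ‖z‖ ^ n := by ring
      rw [this]
      exact div_le_div₀ (by positivity) le_rfl (by positivity)
        (mul_le_mul h1 h2 hpos.le (norm_nonneg _))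
  -- telescoping partial sums
  set g : ℕ → ℂ := fun n => (1 - z)⁻¹ * (1 - z ^ (n + 1))⁻¹ with hg
  have hfg : ∀ n, f n = g n - g (n + 1) := by
    intro n
    rw [hf, hg]
    simp only
    have hx := hne n
    have hy := hne (n + 1)
    rw [show n + 2 = n + 1 + 1 from rfl]
    field_simp
    ring
  have hps : ∀ N, ∑ n ∈ Finset.range N, f n = g 0 - g N := by
    intro N
    simp only [hfg]
    exact Finset.sum_range_sub' g N
  have hgl : Filter.Tendsto g Filter.atTop (nhds ((1 - z)⁻¹)) := by
    rw [hg]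
    have h0 : Filter.Tendsto (fun n : ℕ => z ^ (n + 1)) Filter.atTop (nhds 0) := by
      have := tendsto_pow_atTop_nhds_zero_of_norm_lt_one hz
      exact this.comp (Filter.tendsto_add_atTop_nat 1)
    have h1 : Filter.Tendsto (fun n : ℕ => (1 - z ^ (n + 1))⁻¹) Filter.atTop
        (nhds ((1 : ℂ)⁻¹)) := by
      apply Filter.Tendsto.inv₀
      · simpa using (tendsto_const_nhds.sub h0)
      · simp
    simpa using (tendsto_const_nhds.mul h1)
  have htend : Filter.Tendsto (fun N => ∑ n ∈ Finset.range N, f n) Filter.atTop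
      (nhds (z / (1 - z) ^ 2)) := by
    have : Filter.Tendsto (fun N => g 0 - g N) Filter.atTop
        (nhds (g 0 - (1 - z)⁻¹)) := tendsto_const_nhds.sub hgl
    have heq : g 0 - (1 - z)⁻¹ = z / (1 - z) ^ 2 := by
      rw [hg]
      simp only [pow_one]
      rw [eq_div_iff (pow_ne_zero 2 hz1)]
      field_simp
      rw [zero_add, pow_one, mul_sub, mul_one_div_cancel hz1]; ring
    rw [heq] at this
    simpa only [hps] using this
  exact (hsum.hasSum_iff_tendsto_nat).mpr htend
end

section
/- The formal power series F(x,y) = Σ_{n≥1} H_n(x) yⁿ with coefficients H_n(x) = 1/((1−xⁿ)(1−x^{n+1})) ∈ ℂ(x), regarded as a power series in y with coefficients in ℂ(x), is not D-finite in y: there do not exist k ≥ 0 and polynomials P_0, …, P_k in x and y with complex coefficients, not all zero, such that Σ_{i=0}^{k} P_i · ∂^i F/∂y^i = 0 in ℂ(x)[[y]]. -/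
open scoped Classical

/-- `F(x,y) = Σ_{n≥1} yⁿ/((1−xⁿ)(1−x^{n+1}))`, as a power series in `y` with
coefficients in `ℂ(x)`. -/
noncomputable def Fcounter : PowerSeries (RatFunc ℂ) :=
  PowerSeries.mk fun n =>
    if n = 0 then 0
    else 1 / ((1 - RatFunc.X ^ n) * (1 - RatFunc.X ^ (n + 1)))


open Polynomial Finset

def ffn (l i : ℕ) : ℕ := ∏ r ∈ Finset.range i, (l + 1 + r)

noncomputable def gpol (n : ℕ) : Polynomial ℂ := (1 - X ^ n) * (1 - X ^ (n + 1))

lemma gmap (n : ℕ) : algebraMap (Polynomial ℂ) (RatFunc ℂ) (gpol n)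
    = (1 - RatFunc.X ^ n) * (1 - RatFunc.X ^ (n + 1)) := by
  simp [gpol, map_mul, map_sub, map_pow, RatFunc.algebraMap_X]

lemma coeff_F_mul_g (n : ℕ) (hn : n ≠ 0) :
    PowerSeries.coeff (R := RatFunc ℂ) n Fcounter * algebraMap (Polynomial ℂ) (RatFunc ℂ) (gpol n) = 1 := by
  have h1 : (1 - RatFunc.X ^ n : RatFunc ℂ) ≠ 0 := by
    intro h
    have : algebraMap (Polynomial ℂ) (RatFunc ℂ) (1 - X ^ n) = algebraMap (Polynomial ℂ) (RatFunc ℂ) 0 := by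
      simpa [map_sub, map_pow, RatFunc.algebraMap_X] using h
    have h2 := RatFunc.algebraMap_injective ℂ this
    have := congrArg (fun q => Polynomial.coeff q n) h2
    simp [Polynomial.coeff_one, hn] at this
  have h2 : (1 - RatFunc.X ^ (n+1) : RatFunc ℂ) ≠ 0 := by
    intro h
    have : algebraMap (Polynomial ℂ) (RatFunc ℂ) (1 - X ^ (n+1)) = algebraMap (Polynomial ℂ) (RatFunc ℂ) 0 := by
      simpa [map_sub, map_pow, RatFunc.algebraMap_X] using h
    have h2 := RatFunc.algebraMap_injective ℂ this
    have := congrArg (fun q => Polynomial.coeff q (n+1)) h2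
    simp [Polynomial.coeff_one] at this
  rw [gmap, Fcounter, PowerSeries.coeff_mk, if_neg hn, one_div]
  exact inv_mul_cancel₀ (mul_ne_zero h1 h2)

lemma coeff_iter_deriv (f : PowerSeries (RatFunc ℂ)) (i l : ℕ) :
    PowerSeries.coeff (R := RatFunc ℂ) l ((fun g => PowerSeries.derivative (RatFunc ℂ) g)^[i] f)
      = PowerSeries.coeff (R := RatFunc ℂ) (l + i) f * (ffn l i : RatFunc ℂ) := by
  induction i generalizing l with
  | zero => simp [ffn]
  | succ i ih =>
    rw [Function.iterate_succ_apply']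
    show PowerSeries.coeff (R := RatFunc ℂ) l (PowerSeries.derivative (RatFunc ℂ) _) = _
    rw [PowerSeries.coeff_derivative, ih (l := l + 1)]
    have hf : ffn l (i + 1) = (l + 1) * ffn (l + 1) i := by
      unfold ffn
      rw [Finset.prod_range_succ', mul_comm]
      congr 1
      apply Finset.prod_congr rfl
      intro x _
      omega
    rw [hf]
    have : l + 1 + i = l + (i + 1) := by omega
    rw [this]
    push_cast
    ring

lemma coeffE (k : ℕ) (P : ℕ → Polynomial (Polynomial ℂ))
    (heq : ∑ i ∈ Finset.range (k+1), toSeries (P i) * ((fun g => PowerSeries.derivative (RatFunc ℂ) g)^[i] Fcounter) = 0)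
    (m : ℕ) :
    ∑ i ∈ Finset.range (k+1), ∑ j ∈ Finset.range (m+1),
      algebraMap (Polynomial ℂ) (RatFunc ℂ) ((P i).coeff j)
        * (PowerSeries.coeff (R := RatFunc ℂ) ((m - j) + i) Fcounter * (ffn (m - j) i : RatFunc ℂ)) = 0 := by
  have h := congrArg (PowerSeries.coeff (R := RatFunc ℂ) m) heq
  rw [map_sum, map_zero] at h
  rw [← h]
  apply Finset.sum_congr rfl
  intro i _
  rw [PowerSeries.coeff_mul, Finset.Nat.sum_antidiagonal_eq_sum_range_succ_mk]
  apply Finset.sum_congr rfl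
  intro j _
  rw [coeff_iter_deriv]
  unfold toSeries
  rw [Polynomial.coeff_coe, Polynomial.coeff_map]

lemma keystep (k D i₀ j₀ : ℕ) (P : ℕ → Polynomial (Polynomial ℂ))
    (hi₀k : i₀ ≤ k) (hj₀D : j₀ ≤ D)
    (hDcoeff : ∀ i j, i ≤ k → D < j → (P i).coeff j = 0)
    (hmax1 : ∀ i j, i ≤ k → i₀ + j < i + j₀ → (P i).coeff j = 0)
    (heq : ∑ i ∈ Finset.range (k+1), toSeries (P i) * ((fun g => PowerSeries.derivative (RatFunc ℂ) g)^[i] Fcounter) = 0)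
    (p : ℕ) (hp : p.Prime) (hpge : k + D + 4 ≤ p)
    (α : ℂ) (hα : IsPrimitiveRoot α p)
    (t : ℕ) (ht : 2 ≤ t) :
    ∑ i ∈ Finset.range (k+1), ∑ j ∈ Finset.range (k+D+1),
      (if i₀ + j = i + j₀ then ((P i).coeff j).eval α * ∏ r ∈ Finset.range i, (((p*t : ℕ):ℂ) - i + r) else 0) = 0 := by
  obtain ⟨N, hNdef⟩ : ∃ N', N' = p * t := ⟨_, rfl⟩
  rw [← hNdef]
  have hNbig : 2 * p ≤ N := by
    rw [hNdef]
    calc 2 * p = p * 2 := by ring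
    _ ≤ p * t := Nat.mul_le_mul_left p ht
  have hm0 : i₀ + 1 ≤ N := by omega
  obtain ⟨m, hmdef⟩ : ∃ m', m' = N - (i₀ + 1) + j₀ := ⟨_, rfl⟩
  have hm : m + i₀ + 1 = N + j₀ := by omega
  have hmbig : k + D + 2 ≤ m := by omega
  set W : Finset ℕ := (Finset.Icc (m - D) (m + k)).erase N with hWdef
  -- the cleared-denominator polynomial identity
  have hpoly : ∑ i ∈ Finset.range (k+1), ∑ j ∈ Finset.range (m+1),
      ((P i).coeff j * (ffn (m - j) i : Polynomial ℂ)
        * ∏ n' ∈ W.erase ((m - j) + i), gpol n') = 0 := by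
    apply RatFunc.algebraMap_injective ℂ
    simp only [map_sum, map_zero]
    have hterm : ∀ i ∈ Finset.range (k+1), ∀ j ∈ Finset.range (m+1),
        algebraMap (Polynomial ℂ) (RatFunc ℂ)
          ((P i).coeff j * (ffn (m - j) i : Polynomial ℂ) * ∏ n' ∈ W.erase ((m - j) + i), gpol n')
        = (algebraMap (Polynomial ℂ) (RatFunc ℂ) ((P i).coeff j)
            * (PowerSeries.coeff (R := RatFunc ℂ) ((m - j) + i) Fcounter * (ffn (m - j) i : RatFunc ℂ)))
          * algebraMap (Polynomial ℂ) (RatFunc ℂ) (∏ n' ∈ W, gpol n') := by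
      intro i hi j hj
      rw [Finset.mem_range] at hi hj
      by_cases hc : (P i).coeff j = 0
      · simp [hc]
      · have hik : i ≤ k := by omega
        have hjD : j ≤ D := by
          by_contra h
          exact hc (hDcoeff i j hik (by omega))
        have hnN : (m - j) + i ≠ N := by
          intro h
          exact hc (hmax1 i j hik (by omega))
        have hnW : (m - j) + i ∈ W := by
          rw [hWdef, Finset.mem_erase, Finset.mem_Icc]
          exact ⟨hnN, by omega, by omega⟩
        rw [← Finset.mul_prod_erase W _ hnW, map_mul, map_mul, map_mul, map_natCast]
        have hkey := coeff_F_mul_g ((m - j) + i) (by omega)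
        set aC := algebraMap (Polynomial ℂ) (RatFunc ℂ) ((P i).coeff j)
        set aG := algebraMap (Polynomial ℂ) (RatFunc ℂ) (gpol ((m - j) + i))
        set aE := algebraMap (Polynomial ℂ) (RatFunc ℂ) (∏ n' ∈ W.erase ((m - j) + i), gpol n')
        set cF := PowerSeries.coeff (R := RatFunc ℂ) ((m - j) + i) Fcounter
        rw [show aC * (cF * (ffn (m - j) i : RatFunc ℂ)) * (aG * aE)
            = aC * (ffn (m - j) i : RatFunc ℂ) * aE * (cF * aG) from by ring, hkey, mul_one]
    calc ∑ i ∈ Finset.range (k+1), ∑ j ∈ Finset.range (m+1),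
          algebraMap (Polynomial ℂ) (RatFunc ℂ)
            ((P i).coeff j * (ffn (m - j) i : Polynomial ℂ) * ∏ n' ∈ W.erase ((m - j) + i), gpol n')
        = (∑ i ∈ Finset.range (k+1), ∑ j ∈ Finset.range (m+1),
            algebraMap (Polynomial ℂ) (RatFunc ℂ) ((P i).coeff j)
              * (PowerSeries.coeff (R := RatFunc ℂ) ((m - j) + i) Fcounter * (ffn (m - j) i : RatFunc ℂ)))
          * algebraMap (Polynomial ℂ) (RatFunc ℂ) (∏ n' ∈ W, gpol n') := by
          rw [Finset.sum_mul]
          refine Finset.sum_congr rfl fun i hi => ?_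
          rw [Finset.sum_mul]
          exact Finset.sum_congr rfl fun j hj => hterm i hi j hj
      _ = 0 := by rw [coeffE k P heq m, zero_mul]
  -- evaluation at α
  have hαN : α ^ N = 1 := by rw [hNdef, pow_mul, hα.pow_eq_one, one_pow]
  have hgN1 : Polynomial.eval α (gpol (N - 1)) = 0 := by
    have h1 : N - 1 + 1 = N := by omega
    rw [gpol, h1]
    simp [hαN]
  have hPine : Polynomial.eval α (∏ n' ∈ W.erase (N-1), gpol n') ≠ 0 := by
    rw [Polynomial.eval_prod]
    apply Finset.prod_ne_zero_iff.mpr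
    intro n' hn'
    rw [Finset.mem_erase, hWdef, Finset.mem_erase, Finset.mem_Icc] at hn'
    obtain ⟨hne1, hneN, hlo, hhi⟩ := hn'
    rw [gpol]
    simp only [Polynomial.eval_mul, Polynomial.eval_sub, Polynomial.eval_one, Polynomial.eval_pow,
      Polynomial.eval_X]
    have hNp2 : N + p = p * (t + 1) := by rw [hNdef]; ring
    have hNp : p * (t-1) + p = N := by
      rw [hNdef]
      calc p * (t-1) + p = p * ((t-1) + 1) := (Nat.mul_succ p (t-1)).symm
        _ = p * t := by congr 1; omega
    have hx : N < (m - D) + p := by omega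
    apply mul_ne_zero
    · intro h
      have h1 : α ^ n' = 1 := (sub_eq_zero.mp h).symm
      rw [hα.pow_eq_one_iff_dvd] at h1
      obtain ⟨u, hu⟩ := h1
      have hu1 : u < t + 1 := by
        apply Nat.lt_of_mul_lt_mul_left (a := p)
        rw [← hNp2]
        omega
      have hu2 : t - 1 < u := Nat.lt_of_mul_lt_mul_left (a := p) (by omega)
      have hut : u = t := by omega
      rw [hut, ← hNdef] at hu
      exact hneN hu
    · intro h
      have h1 : α ^ (n' + 1) = 1 := (sub_eq_zero.mp h).symm
      rw [hα.pow_eq_one_iff_dvd] at h1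
      obtain ⟨u, hu⟩ := h1
      have hu1 : u < t + 1 := by
        apply Nat.lt_of_mul_lt_mul_left (a := p)
        rw [← hNp2]
        omega
      have hu2 : t - 1 < u := Nat.lt_of_mul_lt_mul_left (a := p) (by omega)
      have hut : u = t := by omega
      rw [hut, ← hNdef] at hu
      exact hne1 (by omega)
  have heval : ∑ i ∈ Finset.range (k+1), ∑ j ∈ Finset.range (m+1),
      Polynomial.eval α ((P i).coeff j * (ffn (m - j) i : Polynomial ℂ)
        * ∏ n' ∈ W.erase ((m - j) + i), gpol n') = 0 := by
    have h := congrArg (Polynomial.eval α) hpoly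
    simpa [Polynomial.eval_finset_sum] using h
  have hterm2 : ∀ i ∈ Finset.range (k+1), ∀ j ∈ Finset.range (m+1),
      Polynomial.eval α ((P i).coeff j * (ffn (m - j) i : Polynomial ℂ)
        * ∏ n' ∈ W.erase ((m - j) + i), gpol n')
      = (if i₀ + j = i + j₀ then ((P i).coeff j).eval α * ((ffn (m - j) i : ℕ) : ℂ) else 0)
        * Polynomial.eval α (∏ n' ∈ W.erase (N - 1), gpol n') := by
    intro i hi j hj
    rw [Finset.mem_range] at hi hj
    split_ifs with hcond
    · have hn : (m - j) + i = N - 1 := by omega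
      rw [hn, Polynomial.eval_mul, Polynomial.eval_mul, Polynomial.eval_natCast]
    · by_cases hc : (P i).coeff j = 0
      · simp [hc]
      · have hik : i ≤ k := by omega
        have hjD : j ≤ D := by
          by_contra h
          exact hc (hDcoeff i j hik (by omega))
        have hnN : (m - j) + i ≠ N := by
          intro h
          exact hc (hmax1 i j hik (by omega))
        have hnN1 : (m - j) + i ≠ N - 1 := fun h => hcond (by omega)
        have hmemN1 : N - 1 ∈ W.erase ((m - j) + i) := by
          rw [Finset.mem_erase, hWdef, Finset.mem_erase, Finset.mem_Icc]
          exact ⟨fun h => hnN1 h.symm, by omega, by omega, by omega⟩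
        rw [Polynomial.eval_mul, Polynomial.eval_prod,
          Finset.prod_eq_zero hmemN1 hgN1, mul_zero, zero_mul]
  have hsum0 : ∑ i ∈ Finset.range (k+1), ∑ j ∈ Finset.range (m+1),
      (if i₀ + j = i + j₀ then ((P i).coeff j).eval α * ((ffn (m - j) i : ℕ) : ℂ) else 0) = 0 := by
    have h2 : (∑ i ∈ Finset.range (k+1), ∑ j ∈ Finset.range (m+1),
        (if i₀ + j = i + j₀ then ((P i).coeff j).eval α * ((ffn (m - j) i : ℕ) : ℂ) else 0))
        * Polynomial.eval α (∏ n' ∈ W.erase (N - 1), gpol n') = 0 := by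
      rw [Finset.sum_mul]
      calc ∑ i ∈ Finset.range (k+1), (∑ j ∈ Finset.range (m+1),
            (if i₀ + j = i + j₀ then ((P i).coeff j).eval α * ((ffn (m - j) i : ℕ) : ℂ) else 0))
            * Polynomial.eval α (∏ n' ∈ W.erase (N - 1), gpol n')
          = ∑ i ∈ Finset.range (k+1), ∑ j ∈ Finset.range (m+1),
            Polynomial.eval α ((P i).coeff j * (ffn (m - j) i : Polynomial ℂ)
              * ∏ n' ∈ W.erase ((m - j) + i), gpol n') := by
            refine Finset.sum_congr rfl fun i hi => ?_
            rw [Finset.sum_mul]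
            exact Finset.sum_congr rfl fun j hj => (hterm2 i hi j hj).symm
        _ = 0 := heval
    exact (mul_eq_zero.mp h2).resolve_right hPine
  have hmain : ∀ i ∈ Finset.range (k+1),
      (∑ j ∈ Finset.range (k+D+1),
        if i₀ + j = i + j₀ then ((P i).coeff j).eval α * ∏ r ∈ Finset.range i, ((N:ℂ) - i + r) else 0)
      = ∑ j ∈ Finset.range (m+1),
        (if i₀ + j = i + j₀ then ((P i).coeff j).eval α * ((ffn (m - j) i : ℕ) : ℂ) else 0) := by
    intro i hi
    rw [Finset.mem_range] at hi
    have hsub : Finset.range (k+D+1) ⊆ Finset.range (m+1) := by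
      apply Finset.range_subset_range.mpr
      omega
    calc ∑ j ∈ Finset.range (k+D+1),
          (if i₀ + j = i + j₀ then ((P i).coeff j).eval α * ∏ r ∈ Finset.range i, ((N:ℂ) - i + r) else 0)
        = ∑ j ∈ Finset.range (k+D+1),
          (if i₀ + j = i + j₀ then ((P i).coeff j).eval α * ((ffn (m - j) i : ℕ) : ℂ) else 0) := by
          refine Finset.sum_congr rfl fun j hj => ?_
          rw [Finset.mem_range] at hj
          split_ifs with hcond
          · congr 1
            rw [ffn, Nat.cast_prod]
            refine (Finset.prod_congr rfl fun r hr => ?_).symm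
            have h1 : m - j + 1 + r = (N - i) + r := by omega
            rw [h1]
            have h2 : i ≤ N := by omega
            push_cast [Nat.cast_sub h2]
            ring
          · rfl
      _ = ∑ j ∈ Finset.range (m+1),
          (if i₀ + j = i + j₀ then ((P i).coeff j).eval α * ((ffn (m - j) i : ℕ) : ℂ) else 0) := by
          apply Finset.sum_subset hsub
          intro j hjm hjno
          rw [Finset.mem_range] at hjm
          rw [Finset.mem_range] at hjno
          have hnc : ¬ (i₀ + j = i + j₀) := by omega
          rw [if_neg hnc]
  exact (Finset.sum_congr rfl hmain).trans hsum0

/-- `F(x,y) = Σ_{n≥1} yⁿ/((1−xⁿ)(1−x^{n+1}))` is not D-finite as a power series in `y`. -/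
theorem Fcounter_not_dfinite : ¬ IsDFiniteY Fcounter := by
  rintro ⟨k, P, ⟨i₁, hi₁k, hP₁⟩, heq⟩
  obtain ⟨D, hDdef⟩ : ∃ D', D' = (Finset.range (k+1)).sup (fun i => (P i).natDegree) := ⟨_, rfl⟩
  have hDcoeff : ∀ i j, i ≤ k → D < j → (P i).coeff j = 0 := by
    intro i j hik hj
    apply Polynomial.coeff_eq_zero_of_natDegree_lt
    have : (P i).natDegree ≤ D := by
      rw [hDdef]
      exact Finset.le_sup (f := fun i => (P i).natDegree) (Finset.mem_range.mpr (by omega))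
    omega
  -- choose the corner (i₀, j₀)
  obtain ⟨S, hSdef⟩ : ∃ S', S' = ((Finset.range (k+1)) ×ˢ (Finset.range (D+1))).filter
      (fun ij => (P ij.1).coeff ij.2 ≠ 0) := ⟨_, rfl⟩
  have hSmem : ∀ ij : ℕ × ℕ, ij ∈ S ↔ (ij.1 ≤ k ∧ ij.2 ≤ D ∧ (P ij.1).coeff ij.2 ≠ 0) := by
    intro ij
    rw [hSdef, Finset.mem_filter, Finset.mem_product, Finset.mem_range, Finset.mem_range]
    constructor
    · rintro ⟨⟨h1, h2⟩, h3⟩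
      exact ⟨by omega, by omega, h3⟩
    · rintro ⟨h1, h2, h3⟩
      exact ⟨⟨by omega, by omega⟩, h3⟩
  have hSne : S.Nonempty := by
    refine ⟨(i₁, (P i₁).natDegree), (hSmem _).mpr ⟨hi₁k, ?_, ?_⟩⟩
    · have : (P i₁).natDegree ≤ D := by
        rw [hDdef]
        exact Finset.le_sup (f := fun i => (P i).natDegree) (Finset.mem_range.mpr (by omega))
      exact this
    · exact Polynomial.leadingCoeff_ne_zero.mpr hP₁
  obtain ⟨⟨i₀, j₀⟩, hmem, hmax⟩ := S.exists_max_image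
    (fun ij => ((ij.1 : ℤ) - ij.2) * (k+1) + ij.1) hSne
  obtain ⟨hi₀k, hj₀D, ha⟩ := (hSmem _).mp hmem
  have hmax1 : ∀ i j, i ≤ k → i₀ + j < i + j₀ → (P i).coeff j = 0 := by
    intro i j hik hlt
    by_contra hc
    have hjD : j ≤ D := by
      by_contra h
      exact hc (hDcoeff i j hik (by omega))
    have h1 := hmax (i, j) ((hSmem _).mpr ⟨hik, hjD, hc⟩)
    simp only at h1
    have he : ((i₀ : ℤ) - j₀) + 1 ≤ (i : ℤ) - j := by omega
    have h2 : (((i₀ : ℤ) - j₀) + 1) * (k+1) ≤ ((i : ℤ) - j) * (k+1) :=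
      mul_le_mul_of_nonneg_right he (by positivity)
    have h3 : (i : ℤ) ≤ k := by omega
    nlinarith [h1, h2]
  have hmax2 : ∀ i j, i ≤ k → i₀ + j = i + j₀ → i₀ < i → (P i).coeff j = 0 := by
    intro i j hik hcond hlt
    by_contra hc
    have hjD : j ≤ D := by
      by_contra h
      exact hc (hDcoeff i j hik (by omega))
    have h1 := hmax (i, j) ((hSmem _).mpr ⟨hik, hjD, hc⟩)
    simp only at h1
    have he : ((i₀ : ℤ) - j₀) = (i : ℤ) - j := by omega
    rw [he] at h1
    omega
  -- for each large prime, α_p is a root of (P i₀).coeff j₀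
  have hroot : ∀ p : ℕ, p.Prime → k + D + 4 ≤ p →
      ((P i₀).coeff j₀).IsRoot (Complex.exp (2 * Real.pi * Complex.I / p)) := by
    intro p hp hpge
    have hα : IsPrimitiveRoot (Complex.exp (2 * Real.pi * Complex.I / p)) p :=
      Complex.isPrimitiveRoot_exp p hp.ne_zero
    set α := Complex.exp (2 * Real.pi * Complex.I / p) with hαdef
    -- the polynomial G
    obtain ⟨G, hGdef⟩ : ∃ G', G' = ∑ i ∈ Finset.range (k+1), ∑ j ∈ Finset.range (k+D+1),
        (if i₀ + j = i + j₀ then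
          Polynomial.C (((P i).coeff j).eval α) * ∏ r ∈ Finset.range i, (X - Polynomial.C ((i:ℂ) - r))
        else 0) := ⟨_, rfl⟩
    have hGzero : ∀ t : ℕ, 2 ≤ t → G.eval ((p * t : ℕ) : ℂ) = 0 := by
      intro t ht
      have hks := keystep k D i₀ j₀ P hi₀k hj₀D hDcoeff hmax1 heq p hp hpge α hα t ht
      rw [hGdef, Polynomial.eval_finset_sum]
      rw [← hks]
      refine Finset.sum_congr rfl fun i hi => ?_
      rw [Polynomial.eval_finset_sum]
      refine Finset.sum_congr rfl fun j hj => ?_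
      split_ifs with hcond
      · rw [Polynomial.eval_mul, Polynomial.eval_C, Polynomial.eval_prod]
        congr 1
        refine Finset.prod_congr rfl fun r hr => ?_
        rw [Polynomial.eval_sub, Polynomial.eval_X, Polynomial.eval_C]
        ring
      · rw [Polynomial.eval_zero]
    have hG0 : G = 0 := by
      apply Polynomial.eq_zero_of_infinite_isRoot
      apply Set.infinite_of_injective_forall_mem
        (f := fun t : ℕ => ((p * (t + 2) : ℕ) : ℂ))
      · intro a b hab
        have h1 := Nat.cast_injective (R := ℂ) hab
        have hppos : 0 < p := hp.pos
        have h2 := Nat.eq_of_mul_eq_mul_left hppos h1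
        omega
      · intro t
        exact hGzero (t + 2) (by omega)
    -- extract coefficient i₀
    have hGc : G.coeff i₀ = ((P i₀).coeff j₀).eval α := by
      have hdegi : ∀ i : ℕ, (∏ r ∈ Finset.range i, (X - Polynomial.C ((i:ℂ) - r))).natDegree = i := by
        intro i
        rw [Polynomial.natDegree_prod_of_monic _ _ (fun r _ => Polynomial.monic_X_sub_C _)]
        calc ∑ r ∈ Finset.range i, (X - Polynomial.C ((i:ℂ) - r)).natDegree
            = ∑ _r ∈ Finset.range i, 1 :=
              Finset.sum_congr rfl fun r _ => Polynomial.natDegree_X_sub_C _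
          _ = i := by rw [Finset.sum_const, Finset.card_range, smul_eq_mul, mul_one]
      rw [hGdef, Polynomial.finset_sum_coeff]
      rw [Finset.sum_eq_single i₀]
      · rw [Polynomial.finset_sum_coeff]
        rw [Finset.sum_eq_single j₀]
        · rw [if_pos rfl, Polynomial.coeff_C_mul]
          have hmon : (∏ r ∈ Finset.range i₀, (X - Polynomial.C ((i₀:ℂ) - r))).Monic :=
            Polynomial.monic_prod_of_monic _ _ (fun r _ => Polynomial.monic_X_sub_C _)
          have hc1 : (∏ r ∈ Finset.range i₀, (X - Polynomial.C ((i₀:ℂ) - r))).coeff i₀ = 1 := by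
            have h := hmon.coeff_natDegree
            rwa [hdegi i₀] at h
          rw [hc1, mul_one]
        · intro j hj hne
          have hnc : ¬ (i₀ + j = i₀ + j₀) := by omega
          rw [if_neg hnc, Polynomial.coeff_zero]
        · intro h
          exact absurd (Finset.mem_range.mpr (by omega)) h
      · intro i hi hne
        rw [Finset.mem_range] at hi
        rw [Polynomial.finset_sum_coeff]
        apply Finset.sum_eq_zero
        intro j hj
        split_ifs with hcond
        · rcases Nat.lt_or_ge i i₀ with hlt | hge
          · apply Polynomial.coeff_eq_zero_of_natDegree_lt
            calc (Polynomial.C (((P i).coeff j).eval α)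
                  * ∏ r ∈ Finset.range i, (X - Polynomial.C ((i:ℂ) - r))).natDegree
                ≤ (Polynomial.C (((P i).coeff j).eval α)).natDegree
                  + (∏ r ∈ Finset.range i, (X - Polynomial.C ((i:ℂ) - r))).natDegree :=
                  Polynomial.natDegree_mul_le
              _ ≤ i := by rw [Polynomial.natDegree_C, hdegi i]; omega
              _ < i₀ := hlt
          · have hlt : i₀ < i := by omega
            rw [hmax2 i j (by omega) hcond hlt]
            simp
        · simp
      · intro h
        exact absurd (Finset.mem_range.mpr (by omega)) h
    rw [Polynomial.IsRoot, ← hGc, hG0, Polynomial.coeff_zero]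
  -- conclude: infinitely many roots
  have hinf : {x : ℂ | ((P i₀).coeff j₀).IsRoot x}.Infinite := by
    have hPrInf : {q : ℕ | q.Prime ∧ k + D + 4 ≤ q}.Infinite := by
      apply (Nat.infinite_setOf_prime.diff (Set.finite_Iio (k + D + 4))).mono
      intro q hq
      exact ⟨hq.1, by simpa using hq.2⟩
    have hinj : Set.InjOn (fun q : ℕ => Complex.exp (2 * Real.pi * Complex.I / q))
        {q : ℕ | q.Prime ∧ k + D + 4 ≤ q} := by
      intro a ha b hb hab
      have h1 : IsPrimitiveRoot (Complex.exp (2 * Real.pi * Complex.I / a)) a :=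
        Complex.isPrimitiveRoot_exp a ha.1.ne_zero
      have h2 : IsPrimitiveRoot (Complex.exp (2 * Real.pi * Complex.I / b)) b :=
        Complex.isPrimitiveRoot_exp b hb.1.ne_zero
      simp only at hab
      rw [hab] at h1
      exact h1.unique h2
    apply (hPrInf.image hinj).mono
    rintro x ⟨q, hq, rfl⟩
    exact hroot q hq.1 hq.2
  exact ha (Polynomial.eq_zero_of_infinite_isRoot _ hinf)
end
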